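/- arXiv:1412.2331 — 3 statements merged into one kernel-verified Lean document; each statement's English description precedes it below -/
import Mathlib

section
/- Let α and β be hyperbolic isometries of ℍ² whose axes A_α and A_β intersect at a point P. Let Q be the point on A_α at distance τ_α/2 from P in the positive direction of A_α, and let R be the point on A_β at distance τ_β/2 from P in the negative direction of A_β. Then the product αβ is hyperbolic, its axis is the geodesic through R and Q (oriented from R to Q), and d(Q,R) = τ_{αβ}/2. -/
/- Setup: the hyperbolic plane ℍ (upper half-plane model with its hyperbolic
metric), orientation-preserving isometries identified with elements of
SL(2,ℝ) acting by Möbius transformations (so that PSL(2,ℝ) = SL(2,ℝ)/{±1} is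
the isometry group), the ideal boundary ℝ ∪ {∞}, geodesics, axes,
translation lengths, quasi-geodesics, Fuchsian groups and the Goldman
bracket machinery. -/

noncomputable section
open Set UpperHalfPlane ENNReal Metric

/-- `SL(2,ℝ)`, acting on the upper half-plane `ℍ` by Möbius transformations;
orientation-preserving isometries of `ℍ` are exactly `PSL(2,ℝ) = SL(2,ℝ)/±1`. -/
abbrev SL2 := Matrix.SpecialLinearGroup (Fin 2) ℝ

/-- The ideal boundary `∂ℍ = ℝ ∪ {∞}` (`none` is the point `∞`). -/
abbrev Bd := Option ℝ

/-- The Möbius action of `SL(2,ℝ)` on the ideal boundary `ℝ ∪ {∞}`. -/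
def mobius (g : SL2) : Bd → Bd := fun x =>
  match x with
  | none => if g.1 1 0 = 0 then none else some (g.1 0 0 / g.1 1 0)
  | some x => if g.1 1 0 * x + g.1 1 1 = 0 then none
      else some ((g.1 0 0 * x + g.1 0 1) / (g.1 1 0 * x + g.1 1 1))

/-- `g` represents a nontrivial isometry of `ℍ` (i.e. `g ≠ ±1`: a
non-identity element of `PSL(2,ℝ)`). -/
def IsNontrivialIsom (g : SL2) : Prop := ∃ z : ℍ, g • z ≠ z

/-- Elliptic isometry: nontrivial, with a (unique) fixed point in `ℍ`. -/
def IsElliptic (g : SL2) : Prop := IsNontrivialIsom g ∧ ∃! z : ℍ, g • z = z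

/-- Parabolic isometry: nontrivial, no fixed point in `ℍ` and a unique fixed
point on the ideal boundary. -/
def IsParabolic (g : SL2) : Prop :=
  IsNontrivialIsom g ∧ (∀ z : ℍ, g • z ≠ z) ∧ ∃! x : Bd, mobius g x = x

/-- Hyperbolic isometry: nontrivial, no fixed point in `ℍ` and exactly two
fixed points on the ideal boundary. -/
def IsHyperbolicIsom (g : SL2) : Prop :=
  IsNontrivialIsom g ∧ (∀ z : ℍ, g • z ≠ z) ∧
    ∃ x y : Bd, x ≠ y ∧ {p : Bd | mobius g p = p} = {x, y}

/-- The translation length `τ_g = inf_{z ∈ ℍ} d(z, g z)`. -/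
def transLength (g : SL2) : ℝ := ⨅ z : ℍ, dist z (g • z)

/-- `c : ℝ → ℍ` is an (oriented, unit-speed) axis of `g` with translation
length `τ`: a geodesic line on which `g` acts by translation by `τ > 0` in
the positive direction. -/
def IsAxisOf (c : ℝ → ℍ) (g : SL2) (τ : ℝ) : Prop :=
  Isometry c ∧ 0 < τ ∧ ∀ t : ℝ, g • c t = c (t + τ)

/-- The axis of `g` as a subset of `ℍ` (empty if `g` is not hyperbolic). -/
def axisSet (g : SL2) : Set ℍ :=
  {z : ℍ | ∃ (c : ℝ → ℍ) (t : ℝ), IsAxisOf c g (transLength g) ∧ c t = z}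

/-- The tangent direction (as a complex number, via the conformal inclusion
`ℍ ⊂ ℂ`) of a path `c` in `ℍ` at time `t`. -/
def dir (c : ℝ → ℍ) (t : ℝ) : ℂ := deriv (fun s => (c s : ℂ)) t

/-- The signed angle from direction `u` to direction `v`, measured
conformally in `ℂ ⊃ ℍ`; its absolute value is the unoriented angle. -/
def vecAngle (u v : ℂ) : ℝ := Complex.arg (v / u)

/-- Hyperbolic length of the path `γ` over the interval `[s,t]`. -/
def pathLength (γ : ℝ → ℍ) (s t : ℝ) : ℝ≥0∞ := eVariationOn γ (Icc s t)

/-- `γ : ℝ → ℍ` is a `K`-quasi-geodesic: the length of each subpath is at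
most `K` times the distance between its endpoints. -/
def IsQuasiGeodesic (K : ℝ) (γ : ℝ → ℍ) : Prop :=
  ∀ s t : ℝ, s ≤ t → pathLength γ s t ≤ ENNReal.ofReal (K * dist (γ s) (γ t))

/-- `γ` is piecewise geodesic: there are break points `t n` (exhausting `ℝ`)
such that on each `[t n, t (n+1)]`, `γ` traverses a geodesic segment at
constant speed. -/
def IsPiecewiseGeodesic (γ : ℝ → ℍ) : Prop :=
  Continuous γ ∧ ∃ t : ℤ → ℝ, StrictMono t ∧
    (∀ x : ℝ, ∃ n : ℤ, x ∈ Icc (t n) (t (n + 1))) ∧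
    ∀ n : ℤ, ∃ (c : ℝ → ℍ) (u v : ℝ), Isometry c ∧
      ∀ s ∈ Icc (t n) (t (n + 1)), γ s = c (u + v * s)

/-- `γ` restricted to `[a,b]` is a geodesic segment traversed at constant
speed. -/
def GeodSeg (γ : ℝ → ℍ) (a b : ℝ) : Prop :=
  ∃ (c : ℝ → ℍ) (u v : ℝ), Isometry c ∧ ∀ s ∈ Icc a b, γ s = c (u + v * s)

/-- The subgroup `G ≤ SL(2,ℝ)` acts properly discontinuously on `ℍ`
(equivalently, the corresponding subgroup of `PSL(2,ℝ)` is discrete). -/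
def ProperlyDiscontinuous (G : Subgroup SL2) : Prop :=
  ∀ K : Set ℍ, IsCompact K → {g : G | ((((g : SL2)) • ·) '' K ∩ K).Nonempty}.Finite

/-- `G` acts freely on `ℍ`: no element acting nontrivially has a fixed point. -/
def ActsFreely (G : Subgroup SL2) : Prop :=
  ∀ g : G, IsNontrivialIsom (g : SL2) → ∀ z : ℍ, (g : SL2) • z ≠ z

/-- `G` is torsion-free. -/
def TorsionFree (G : Subgroup SL2) : Prop :=
  ∀ g : G, ∀ n : ℕ, n ≠ 0 → g ^ n = 1 → g = 1

/-- The action of `G` is cocompact (closed quotient surface). -/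
def Cocompact (G : Subgroup SL2) : Prop :=
  ∃ K : Set ℍ, IsCompact K ∧ ∀ z : ℍ, ∃ g : G, (g : SL2) • z ∈ K

/-- `α ∈ G` represents a *simple* closed geodesic: it is hyperbolic and any
two `G`-translates of its axis are equal or disjoint. -/
def IsSimple (G : Subgroup SL2) (α : G) : Prop :=
  IsHyperbolicIsom (α : SL2) ∧
  ∀ g : G, (((g : SL2) • ·) '' axisSet (α : SL2) = axisSet (α : SL2)) ∨
    Disjoint (((g : SL2) • ·) '' axisSet (α : SL2)) (axisSet (α : SL2))

/-- The fundamental segment `I(α,β) ⊆ A_α`: the half-open segment of length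
`τ_α` starting at the intersection point of `A_α` and `A_β`, in the positive
direction of `A_α`. -/
def fundSeg (α β : SL2) : Set ℍ :=
  {x : ℍ | ∃ (c : ℝ → ℍ) (t₀ t : ℝ), IsAxisOf c α (transLength α) ∧
      c t₀ ∈ axisSet β ∧ t ∈ Ico t₀ (t₀ + transLength α) ∧ c t = x}

/-- The translate `g A_β` crosses the fundamental segment `I(α,β)` of `A_α`
(transversally: it is a geodesic distinct from `A_α` meeting `I(α,β)`). -/
def Meets (α β g : SL2) : Prop :=
  (g • ·) '' axisSet β ≠ axisSet α ∧ (((g • ·) '' axisSet β) ∩ fundSeg α β).Nonempty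

/-- The sign `ε = ±1` of the transversal intersection between the oriented
axes of `α` and `β'`, computed conformally from the tangent directions at
the intersection point. -/
def SignCond (α β' : SL2) (ε : ℤ) : Prop :=
  ∀ (c c' : ℝ → ℍ) (t s : ℝ), IsAxisOf c α (transLength α) →
    IsAxisOf c' β' (transLength β') → c t = c' s →
    (0 < ((dir c' s) / (dir c t)).im ∧ ε = 1) ∨
    (((dir c' s) / (dir c t)).im < 0 ∧ ε = -1)

/-- The piecewise-geodesic lift `γ(α,β)` of the loop product `α∗β`: the
`(αβ)`-periodic path obtained by concatenating the geodesic segment from `P`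
to `αP` (on `[0,1/2]`) with the geodesic segment from `αP` to `αβP`
(on `[1/2,1]`), where `P = A_α ∩ A_β`. -/
def IsZigzag (α β : SL2) (γ : ℝ → ℍ) : Prop :=
  Continuous γ ∧ γ 0 ∈ axisSet α ∩ axisSet β ∧ γ (1/2) = α • γ 0 ∧
  (∀ t : ℝ, γ (t + 1) = (α * β) • γ t) ∧ GeodSeg γ 0 (1/2) ∧ GeodSeg γ (1/2) 1

/-- Hyperbolic convexity: `A` contains the geodesic segment between any two
of its points. -/
def HConvex (A : Set ℍ) : Prop :=
  ∀ x ∈ A, ∀ y ∈ A, ∀ c : ℝ → ℍ, Isometry c → c 0 = x → c (dist x y) = y →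
    ∀ t ∈ Icc (0 : ℝ) (dist x y), c t ∈ A

/-- The hyperbolically convex hull of a set in `ℍ`. -/
def hConvexHull (s : Set ℍ) : Set ℍ := ⋂₀ {A : Set ℍ | HConvex A ∧ s ⊆ A}

/-- `θ` is the (unoriented) angle at `P` between the geodesic segments from
`P` to `X` and from `P` to `Y`. -/
def AngleAt (P X Y : ℍ) (θ : ℝ) : Prop :=
  ∀ c₁ c₂ : ℝ → ℍ, Isometry c₁ → Isometry c₂ → c₁ 0 = P → c₂ 0 = P →
    c₁ (dist P X) = X → c₂ (dist P Y) = Y →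
    |vecAngle (dir c₁ 0) (dir c₂ 0)| = θ

/-- The quotient hyperbolic surface `F = ℍ/G`. -/
abbrev SurfaceOf (G : Subgroup SL2) := Quotient (MulAction.orbitRel G ℍ)

/-- `f` is a closed loop on the surface `F = ℍ/G` in the free homotopy class
of (the conjugacy class of) `g`: it is a continuous `1`-periodic loop
admitting a continuous lift to `ℍ` which is `g`-equivariant. -/
def LoopRep (G : Subgroup SL2) (f : ℝ → SurfaceOf G) (g : G) : Prop :=
  Continuous f ∧ (∀ t : ℝ, f (t + 1) = f t) ∧
  ∃ lift : ℝ → ℍ, Continuous lift ∧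
    (∀ t : ℝ, (Quotient.mk _ (lift t) : SurfaceOf G) = f t) ∧
    (∀ t : ℝ, lift (t + 1) = (g : SL2) • lift t)

/-- The geometric intersection number of the free homotopy classes of `a`
and `b`: the minimal number of intersection points between representative
loops of the two classes. -/
def geomInt (G : Subgroup SL2) (a b : G) : ℕ :=
  sInf {n : ℕ | ∃ f f' : ℝ → SurfaceOf G, LoopRep G f a ∧ LoopRep G f' b ∧
    {p : ℝ × ℝ | p.1 ∈ Ico (0 : ℝ) 1 ∧ p.2 ∈ Ico (0 : ℝ) 1 ∧ f p.1 = f' p.2}.ncard = n}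

/-- `g ∈ G` is peripheral: freely homotopic to a puncture (parabolic) or to
a geodesic boundary component, i.e. a hyperbolic element one of whose
complementary half-planes `U` is precisely invariant under the cyclic group
generated by `g`. -/
def IsPeripheral (G : Subgroup SL2) (g : G) : Prop :=
  IsParabolic (g : SL2) ∨
  (IsHyperbolicIsom (g : SL2) ∧ ∃ U : Set ℍ,
    IsOpen U ∧ U.Nonempty ∧ IsConnected U ∧ Disjoint U (axisSet (g : SL2)) ∧
    frontier U = axisSet (g : SL2) ∧
    (∀ h : G, ((h : SL2) • ·) '' U = U ∨ Disjoint (((h : SL2) • ·) '' U) U) ∧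
    (∀ h : G, ((h : SL2) • ·) '' U = U → ∃ k : ℤ, h = g ^ k))

/-- `br` is the Goldman bracket on the free `ℤ`-module on the free homotopy
classes of oriented closed curves of `F = ℍ/G` (= conjugacy classes of `G`):
it is `ℤ`-bilinear, skew-symmetric, vanishes on non-essential classes and on
classes with disjoint geodesic representatives, and on essential classes it
is given by Goldman's formula `[α,β] = Σ_{gB ∈ J(α,β)} ε(α,β^g)⟨αβ^g⟩`,
the sum over cosets `gB ∈ G/⟨β⟩` whose translate `gA_β` crosses the
fundamental segment `I(α,β) ⊆ A_α`, with geometric intersection signs `ε`. -/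
def IsGoldmanBracket (G : Subgroup SL2)
    (br : (ConjClasses ↥G →₀ ℤ) → (ConjClasses ↥G →₀ ℤ) → (ConjClasses ↥G →₀ ℤ)) : Prop :=
  (∀ x y z, br (x + y) z = br x z + br y z) ∧
  (∀ x y z, br x (y + z) = br x y + br x z) ∧
  (∀ (n : ℤ) (x y), br (n • x) y = n • br x y) ∧
  (∀ (n : ℤ) (x y), br x (n • y) = n • br x y) ∧
  (∀ x y, br x y = - br y x) ∧
  (∀ α β : G, ¬ IsHyperbolicIsom (α : SL2) →
      br (Finsupp.single (ConjClasses.mk α) 1) (Finsupp.single (ConjClasses.mk β) 1) = 0) ∧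
  (∀ α β : G, (∀ g : G, Disjoint (((g : SL2) • ·) '' axisSet (β : SL2)) (axisSet (α : SL2))) →
      br (Finsupp.single (ConjClasses.mk α) 1) (Finsupp.single (ConjClasses.mk β) 1) = 0) ∧
  (∀ α β : G, IsHyperbolicIsom (α : SL2) → IsHyperbolicIsom (β : SL2) →
    axisSet (α : SL2) ≠ axisSet (β : SL2) →
    ∃ s : Finset G,
      (∀ g ∈ s, Meets (α : SL2) (β : SL2) (g : SL2)) ∧
      (∀ g ∈ s, ∀ g' ∈ s, (∃ k : ℤ, g' = g * β ^ k) → g = g') ∧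
      (∀ g : G, Meets (α : SL2) (β : SL2) (g : SL2) → ∃ g' ∈ s, ∃ k : ℤ, g = g' * β ^ k) ∧
      ∃ ε : G → ℤ,
        (∀ g ∈ s, SignCond (α : SL2) ((g : SL2) * (β : SL2) * (g : SL2)⁻¹) (ε g)) ∧
        br (Finsupp.single (ConjClasses.mk α) 1) (Finsupp.single (ConjClasses.mk β) 1) =
          ∑ g ∈ s, ε g • Finsupp.single (ConjClasses.mk (α * (g * β * g⁻¹))) 1)

lemma denom_ne (g : SL2) (z : ℍ) : (g.1 1 0 : ℂ) * z + g.1 1 1 ≠ 0 := by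
  intro h
  have him : (g.1 1 0) * z.im = 0 := by
    have := congrArg Complex.im h
    simpa using this
  have hc : g.1 1 0 = 0 := by
    rcases mul_eq_zero.1 him with h' | h'
    · exact h'
    · exact absurd h' (ne_of_gt z.im_pos)
  have hd : g.1 1 1 = 0 := by
    have := congrArg Complex.re h
    simp [hc] at this
    exact_mod_cast this
  have hdet := g.2
  rw [Matrix.det_fin_two, hc, hd] at hdet
  simp at hdet

lemma coe_smul_SL (g : SL2) (z : ℍ) :
    ((g • z : ℍ) : ℂ) = (g.1 0 0 * z + g.1 0 1) / (g.1 1 0 * z + g.1 1 1) := by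
  rw [UpperHalfPlane.specialLinearGroup_apply]
  simp


/-- The standard geodesic `t ↦ i e^t`. -/
def std (t : ℝ) : ℍ := UpperHalfPlane.mk ⟨0, Real.exp t⟩ (Real.exp_pos t)

lemma std_coe (t : ℝ) : (std t : ℂ) = ⟨0, Real.exp t⟩ := rfl

lemma isometry_std : Isometry std := UpperHalfPlane.isometry_vertical_line 0

lemma smul_eq_iff (g : SL2) (z w : ℍ) :
    g • z = w ↔ (g.1 0 0 : ℂ) * z + g.1 0 1 = (w : ℂ) * ((g.1 1 0 : ℂ) * z + g.1 1 1) := by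
  rw [UpperHalfPlane.ext_iff, coe_smul_SL, div_eq_iff (denom_ne g z)]

lemma fix_std_pm_one (m : SL2) (h0 : m • std 0 = std 0) (h1 : m • std 1 = std 1) :
    m = 1 ∨ m = -1 := by
  rw [smul_eq_iff] at h0 h1
  simp only [std_coe] at h0 h1
  have e0re := congrArg Complex.re h0
  have e0im := congrArg Complex.im h0
  have e1re := congrArg Complex.re h1
  simp only [Complex.add_re, Complex.add_im, Complex.mul_re, Complex.mul_im,
    Complex.ofReal_re, Complex.ofReal_im, Real.exp_zero] at e0re e0im e1re
  norm_num at e0re e0im e1re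
  have he : (1:ℝ) < Real.exp 1 := by
    have := Real.exp_one_gt_d9; linarith
  have hc : m.1 1 0 = 0 := by
    have h2 : m.1 1 0 * (Real.exp 1 * Real.exp 1 - 1) = 0 := by
      linear_combination e1re - e0re
    rcases mul_eq_zero.1 h2 with h | h
    · exact h
    · nlinarith
  have hb : m.1 0 1 = 0 := by rw [e0re, hc, neg_zero]
  have hdet := m.2
  rw [Matrix.det_fin_two] at hdet
  have had : m.1 0 0 * m.1 0 0 = 1 := by
    rw [e0im] at hdet ⊢
    nlinarith [hdet]
  rcases mul_self_eq_one_iff.1 had with ha | ha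
  · left; apply Subtype.ext
    rw [Matrix.SpecialLinearGroup.coe_one, Matrix.eta_fin_two m.1, hb, hc, ← e0im, ha,
      Matrix.one_fin_two]
  · right; apply Subtype.ext
    rw [Matrix.SpecialLinearGroup.coe_neg, Matrix.SpecialLinearGroup.coe_one,
      Matrix.eta_fin_two m.1, hb, hc, ← e0im, ha, Matrix.one_fin_two]
    norm_num

lemma neg_smul_SL (g : SL2) (z : ℍ) : (-g) • z = g • z := by
  apply UpperHalfPlane.ext
  rw [coe_smul_SL, coe_smul_SL]
  have h : ((-g).1 : Matrix (Fin 2) (Fin 2) ℝ) = -(g.1) := Matrix.SpecialLinearGroup.coe_neg g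
  rw [h]
  simp only [Matrix.neg_apply]
  push_cast
  rw [show (-(g.1 0 0:ℂ)) * z + -(g.1 0 1:ℂ) = -((g.1 0 0:ℂ)*z + g.1 0 1) by ring,
      show (-(g.1 1 0:ℂ)) * z + -(g.1 1 1:ℂ) = -((g.1 1 0:ℂ)*z + g.1 1 1) by ring,
      neg_div_neg_eq]

/-- The standard hyperbolic translation of length `τ` along `std`. -/
def Dmat (τ : ℝ) : SL2 :=
  ⟨!![Real.exp (τ/2), 0; 0, Real.exp (-(τ/2))], by
    rw [Matrix.det_fin_two]
    simp [← Real.exp_add]⟩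

lemma Dmat_smul (τ t : ℝ) : Dmat τ • std t = std (t + τ) := by
  rw [smul_eq_iff]
  show (Real.exp (τ/2) : ℂ) * (std t : ℂ) + (0:ℝ) =
    (std (t+τ) : ℂ) * ((0:ℝ) * (std t:ℂ) + (Real.exp (-(τ/2)) : ℝ))
  simp only [std_coe, Complex.ofReal_zero, zero_mul, zero_add, add_zero]
  have key : Real.exp (τ/2) * Real.exp t = Real.exp (t+τ) * Real.exp (-(τ/2)) := by
    rw [← Real.exp_add, ← Real.exp_add]; congr 1; ring
  apply Complex.ext <;>
      simp only [Complex.mul_re, Complex.mul_im, Complex.ofReal_re, Complex.ofReal_im] <;>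
    linarith [key]

lemma fix_std_all (m : SL2) (h : ∀ t, m • std t = std t) : m = 1 ∨ m = -1 :=
  fix_std_pm_one m (h 0) (h 1)

lemma conj_translate (m g : SL2) (τ : ℝ)
    (h : ∀ t, m • (g • std t) = g • std (t + τ)) :
    m = g * Dmat τ * g⁻¹ ∨ m = -(g * Dmat τ * g⁻¹) := by
  have hn : ∀ t, ((Dmat τ)⁻¹ * (g⁻¹ * m * g)) • std t = std t := by
    intro t
    have h1 : (g⁻¹ * m * g) • std t = std (t + τ) := by
      rw [mul_smul, mul_smul, h t, inv_smul_smul]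
    rw [mul_smul, h1, ← Dmat_smul τ t, inv_smul_smul]
  rcases fix_std_all _ hn with h1 | h1
  · left
    have h2 : g⁻¹ * (m * g) = Dmat τ := by
      have := congrArg (fun x => Dmat τ * x) h1
      simpa [mul_assoc] using this
    calc m = g * (g⁻¹ * (m * g)) * g⁻¹ := by group
    _ = g * Dmat τ * g⁻¹ := by rw [h2]
  · right
    have h2 : g⁻¹ * (m * g) = -Dmat τ := by
      have := congrArg (fun x => Dmat τ * x) h1
      simpa [mul_assoc] using this
    calc m = g * (g⁻¹ * (m * g)) * g⁻¹ := by group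
    _ = g * (-Dmat τ) * g⁻¹ := by rw [h2]
    _ = -(g * Dmat τ * g⁻¹) := by simp

lemma transLength_le (m : SL2) (z : ℍ) : transLength m ≤ dist z (m • z) := by
  apply ciInf_le
  refine ⟨0, ?_⟩
  rintro x ⟨w, rfl⟩
  exact dist_nonneg

lemma le_transLength (m : SL2) (r : ℝ) (h : ∀ z : ℍ, r ≤ dist z (m • z)) : r ≤ transLength m :=
  le_ciInf h

lemma transLength_conj (g m : SL2) : transLength (g * m * g⁻¹) = transLength m := by
  apply le_antisymm
  · apply le_ciInf
    intro z
    have h1 : (g * m * g⁻¹) • (g • z) = g • (m • z) := by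
      rw [mul_smul, mul_smul, inv_smul_smul]
    calc transLength (g * m * g⁻¹) ≤ dist (g • z) ((g * m * g⁻¹) • (g • z)) :=
          transLength_le _ _
    _ = dist z (m • z) := by rw [h1, dist_smul]
  · apply le_ciInf
    intro z
    have h1 : m • (g⁻¹ • z) = g⁻¹ • ((g * m * g⁻¹) • z) := by
      rw [mul_smul, mul_smul, inv_smul_smul]
    calc transLength m ≤ dist (g⁻¹ • z) (m • (g⁻¹ • z)) := transLength_le _ _
    _ = dist z ((g * m * g⁻¹) • z) := by rw [h1, dist_smul]

lemma transLength_neg (m : SL2) : transLength (-m) = transLength m := by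
  unfold transLength
  congr 1
  funext z
  rw [neg_smul_SL]

lemma Dmat_smul_coe (τ : ℝ) (z : ℍ) :
    ((Dmat τ • z : ℍ) : ℂ) = Real.exp τ * (z : ℂ) := by
  rw [coe_smul_SL]
  have h00 : (Dmat τ).1 0 0 = Real.exp (τ/2) := by simp [Dmat]
  have h01 : (Dmat τ).1 0 1 = 0 := by simp [Dmat]
  have h10 : (Dmat τ).1 1 0 = 0 := by simp [Dmat]
  have h11 : (Dmat τ).1 1 1 = Real.exp (-(τ/2)) := by simp [Dmat]
  rw [h00, h01, h10, h11]
  have hne : ((Real.exp (-(τ/2)) : ℝ) : ℂ) ≠ 0 := by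
    simp [Complex.ofReal_ne_zero, Real.exp_ne_zero]
  have key : ((Real.exp τ : ℝ):ℂ) * ((Real.exp (-(τ/2)) : ℝ):ℂ) = ((Real.exp (τ/2) : ℝ):ℂ) := by
    rw [← Complex.ofReal_mul, ← Real.exp_add, show τ + -(τ/2) = τ/2 by ring]
  rw [Complex.ofReal_zero, zero_mul, zero_add, add_zero, div_eq_iff hne]
  linear_combination (-(z:ℂ)) * key

lemma cosh_le_cosh_dist_Dmat (τ : ℝ) (z : ℍ) :
    Real.cosh τ ≤ Real.cosh (dist z (Dmat τ • z)) := by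
  rw [UpperHalfPlane.cosh_dist]
  have him : (Dmat τ • z).im = Real.exp τ * z.im := by
    have := congrArg Complex.im (Dmat_smul_coe τ z)
    rw [Complex.mul_im, Complex.ofReal_re, Complex.ofReal_im, zero_mul, add_zero] at this
    exact this
  have hdist : dist (z : ℂ) ((Dmat τ • z : ℍ) : ℂ) ^ 2 =
      (Real.exp τ - 1)^2 * Complex.normSq (z : ℂ) := by
    rw [Dmat_smul_coe, Complex.dist_eq, Complex.sq_norm]
    have : (z : ℂ) - Real.exp τ * z = ((1 - Real.exp τ : ℝ) : ℂ) * z := by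
      push_cast; ring
    rw [this, Complex.normSq_mul, Complex.normSq_ofReal]
    ring
  rw [hdist, him]
  have hcosh : Real.cosh τ = 1 + (Real.exp τ - 1)^2 / (2 * Real.exp τ) := by
    rw [Real.cosh_eq, Real.exp_neg]
    field_simp [Real.exp_ne_zero]
    ring
  rw [hcosh]
  have hsq : Complex.normSq (z : ℂ) = z.re^2 + z.im^2 := by
    rw [Complex.normSq_apply, UpperHalfPlane.coe_re, UpperHalfPlane.coe_im]; ring
  have h1 : (0:ℝ) < Real.exp τ := Real.exp_pos τ
  have h2 : (0:ℝ) < z.im := z.im_pos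
  rw [hsq]
  have key : (Real.exp τ - 1)^2/(2*Real.exp τ) ≤
      (Real.exp τ - 1)^2 * (z.re^2 + z.im^2)/(2*z.im*(Real.exp τ * z.im)) := by
    rw [div_le_div_iff₀ (by positivity) (by positivity)]
    nlinarith [mul_nonneg (mul_nonneg h1.le (sq_nonneg (Real.exp τ - 1))) (sq_nonneg z.re),
      sq_nonneg z.im]
  linarith [key]

lemma transLength_Dmat (τ : ℝ) (hτ : 0 ≤ τ) : transLength (Dmat τ) = τ := by
  apply le_antisymm
  · calc transLength (Dmat τ) ≤ dist (std 0) (Dmat τ • std 0) := transLength_le _ _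
    _ = τ := by
        rw [Dmat_smul, isometry_std.dist_eq]
        simp [abs_of_nonneg hτ]
  · apply le_transLength
    intro z
    have := cosh_le_cosh_dist_Dmat τ z
    rw [Real.cosh_le_cosh] at this
    calc τ = |τ| := (abs_of_nonneg hτ).symm
    _ ≤ |dist z (Dmat τ • z)| := this
    _ = dist z (Dmat τ • z) := abs_of_nonneg dist_nonneg

lemma circle_eq (s : ℝ) (w : ℍ) (r : ℝ) (h : dist (std s) w = r) :
    w.re^2 + w.im^2 + Real.exp (2*s) = 2 * w.im * Real.exp s * Real.cosh r := by
  have hc := UpperHalfPlane.cosh_dist (std s) w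
  rw [h] at hc
  have him : (std s).im = Real.exp s := rfl
  have hre : (std s).re = 0 := rfl
  have hd2 : dist ((std s : ℍ) : ℂ) (w : ℂ) ^ 2 = w.re^2 + (Real.exp s - w.im)^2 := by
    rw [Complex.dist_eq, Complex.sq_norm, Complex.normSq_apply]
    simp only [Complex.sub_re, Complex.sub_im, std_coe, UpperHalfPlane.coe_re,
      UpperHalfPlane.coe_im]
    ring
  rw [hd2, him] at hc
  have hexp : Real.exp s > 0 := Real.exp_pos s
  have himw : w.im > 0 := w.im_pos
  have h2 : Real.exp (2*s) = Real.exp s * Real.exp s := by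
    rw [← Real.exp_add]; ring_nf
  field_simp at hc
  nlinarith [hc, h2]

/-- the matrix moving `z` to `i`. -/
def Amat (z : ℍ) : SL2 :=
  ⟨!![1/Real.sqrt z.im, -z.re/Real.sqrt z.im; 0, Real.sqrt z.im], by
    have h : Real.sqrt z.im > 0 := Real.sqrt_pos.2 z.im_pos
    rw [Matrix.det_fin_two]
    simp
    field_simp⟩

lemma Amat_smul (z : ℍ) : Amat z • z = std 0 := by
  have h : Real.sqrt z.im > 0 := Real.sqrt_pos.2 z.im_pos
  rw [smul_eq_iff]
  show ((1/Real.sqrt z.im : ℝ) : ℂ) * z + ((-z.re/Real.sqrt z.im : ℝ) : ℂ) =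
    (std 0 : ℂ) * (((0:ℝ):ℂ) * z + ((Real.sqrt z.im : ℝ):ℂ))
  have hsq : (Real.sqrt z.im) * (Real.sqrt z.im) = z.im := Real.mul_self_sqrt z.im_pos.le
  have hz : (z : ℂ) = Complex.mk z.re z.im := Complex.ext rfl rfl
  rw [hz]
  apply Complex.ext <;>
    simp only [std_coe, Complex.add_re, Complex.add_im, Complex.mul_re, Complex.mul_im,
      Complex.ofReal_re, Complex.ofReal_im, Real.exp_zero] <;>
    field_simp <;> nlinarith [hsq, h]

def Smat : SL2 := ⟨!![0, 1; -1, 0], by rw [Matrix.det_fin_two]; norm_num⟩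

lemma Smat_smul (t : ℝ) : Smat • std t = std (-t) := by
  rw [smul_eq_iff]
  show ((0:ℝ):ℂ) * (std t) + ((1:ℝ):ℂ) = (std (-t) : ℂ) * (((-1:ℝ):ℂ) * (std t) + ((0:ℝ):ℂ))
  have key : Real.exp (-t) * Real.exp t = 1 := by
    rw [← Real.exp_add]; simp
  apply Complex.ext <;>
    simp only [std_coe, Complex.add_re, Complex.add_im, Complex.mul_re, Complex.mul_im,
      Complex.ofReal_re, Complex.ofReal_im] <;>
    norm_num
  linarith [key]

lemma exists_rot (w : ℍ) (d : ℝ) (hd : dist (std 0) w = d) :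
    ∃ k : SL2, k • std 0 = std 0 ∧ k • w = std d := by
  have hcirc := circle_eq 0 w d hd
  rw [Real.exp_zero] at hcirc
  norm_num at hcirc
  -- hcirc : w.re^2 + w.im^2 + 1 = 2 * w.im * cosh d
  by_cases hcase : w.re = 0 ∧ w.im = Real.exp (-d)
  · -- w = std (-d)
    have hw : w = std (-d) := by
      apply UpperHalfPlane.ext
      apply Complex.ext
      · simpa [std_coe] using hcase.1
      · simpa [std_coe] using hcase.2
    refine ⟨Smat, ?_, ?_⟩
    · simpa using Smat_smul 0
    · rw [hw, Smat_smul, neg_neg]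
  · set u := w.re with hu
    set v := w.im with hv
    have hvpos : 0 < v := w.im_pos
    have hN : 0 < (Real.exp d * v - 1)^2 + u^2 := by
      rcases lt_or_ge 0 ((Real.exp d * v - 1)^2 + u^2) with h | h
      · exact h
      · exfalso
        have h1 : (Real.exp d * v - 1)^2 = 0 ∧ u^2 = 0 := by
          constructor <;> nlinarith [sq_nonneg (Real.exp d * v - 1), sq_nonneg u]
        have hu0 : u = 0 := by
          have := h1.2; exact pow_eq_zero_iff (by norm_num) |>.1 this
        have hv0 : v = Real.exp (-d) := by
          have h2 : Real.exp d * v = 1 := by nlinarith [h1.1]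
          rw [Real.exp_neg]
          field_simp [Real.exp_ne_zero] at h2 ⊢
          linarith [h2]
        exact hcase ⟨hu0, hv0⟩
    set N := Real.sqrt ((Real.exp d * v - 1)^2 + u^2) with hNdef
    have hNpos : 0 < N := Real.sqrt_pos.2 hN
    have hNsq : N * N = (Real.exp d * v - 1)^2 + u^2 := Real.mul_self_sqrt hN.le
    refine ⟨⟨!![(Real.exp d * v - 1)/N, u/N; -u/N, (Real.exp d * v - 1)/N], by
      rw [Matrix.det_fin_two]; simp; field_simp; nlinarith [hNsq]⟩, ?_, ?_⟩
    · refine (smul_eq_iff _ _ _).2 ?_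
      show (((Real.exp d * v - 1)/N : ℝ) : ℂ) * (std 0) + ((u/N : ℝ) : ℂ) =
        (std 0 : ℂ) * (((-u/N : ℝ):ℂ) * (std 0) + (((Real.exp d * v - 1)/N : ℝ):ℂ))
      apply Complex.ext <;>
        simp only [std_coe, Complex.add_re, Complex.add_im, Complex.mul_re, Complex.mul_im,
          Complex.ofReal_re, Complex.ofReal_im, Real.exp_zero] <;> ring
    · refine (smul_eq_iff _ _ _).2 ?_
      show (((Real.exp d * v - 1)/N : ℝ) : ℂ) * (w : ℂ) + ((u/N : ℝ) : ℂ) =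
        (std d : ℂ) * (((-u/N : ℝ):ℂ) * (w : ℂ) + (((Real.exp d * v - 1)/N : ℝ):ℂ))
      have hw : (w : ℂ) = Complex.mk u v := Complex.ext rfl rfl
      have hcoshd : Real.cosh d = (Real.exp d + Real.exp (-d))/2 := Real.cosh_eq d
      have hed : Real.exp (-d) * Real.exp d = 1 := by rw [← Real.exp_add]; simp
      rw [hw]
      apply Complex.ext <;>
        simp only [std_coe, Complex.add_re, Complex.add_im, Complex.mul_re, Complex.mul_im,
          Complex.ofReal_re, Complex.ofReal_im] <;>
        field_simp
      · ring
      · have him : (Real.exp d * v - 1) * v = Real.exp d * (-(u*u) + (Real.exp d * v - 1)) := by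
          linear_combination Real.exp d * hcirc + 2*Real.exp d*v*hcoshd + v*hed
        linear_combination him

lemma exists_g_pair (z w : ℍ) :
    ∃ g : SL2, g • z = std 0 ∧ g • w = std (dist z w) := by
  obtain ⟨k, hk0, hkw⟩ := exists_rot (Amat z • w) (dist z w) (by
    rw [← Amat_smul z, dist_smul])
  exact ⟨k * Amat z, by rw [mul_smul, Amat_smul, hk0], by rw [mul_smul, hkw]⟩

lemma geodesic_eq_std (c : ℝ → ℍ) (hc : Isometry c) (h0 : c 0 = std 0) (h1 : c 1 = std 1) :
    ∀ t, c t = std t := by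
  intro t
  set w := c t with hw
  have hd0 : dist (std 0) w = |t| := by
    rw [← h0, hw, hc.dist_eq, Real.dist_eq]
    simp [abs_sub_comm]
  have hd1 : dist (std 1) w = |1 - t| := by
    rw [← h1, hw, hc.dist_eq, Real.dist_eq]
  have hc0 := circle_eq 0 w _ hd0
  have hc1 := circle_eq 1 w _ hd1
  rw [Real.cosh_abs] at hc0 hc1
  rw [show (2:ℝ) * 0 = 0 by norm_num, Real.exp_zero, Real.cosh_eq] at hc0
  rw [Real.cosh_eq] at hc1
  have e1 : Real.exp (-t) * Real.exp t = 1 := by rw [← Real.exp_add]; simp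
  have e2 : Real.exp (1 - t) = Real.exp 1 * Real.exp (-t) := by
    rw [← Real.exp_add]; ring_nf
  have e3 : Real.exp (-(1-t)) * Real.exp 1 = Real.exp t := by
    rw [← Real.exp_add]; ring_nf
  have e4 : Real.exp (2*1) = Real.exp 1 * Real.exp 1 := by rw [← Real.exp_add]; ring_nf
  have he1 : (1:ℝ) < Real.exp 1 := by linarith [Real.exp_one_gt_d9]
  have hvpos : 0 < w.im := w.im_pos
  have htpos : 0 < Real.exp t := Real.exp_pos t
  rw [e4, e2] at hc1
  have hne : Real.exp 1 * Real.exp 1 - 1 ≠ 0 := by nlinarith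
  have key2 : (w.im * Real.exp (-t) - 1) * (Real.exp 1 * Real.exp 1 - 1) = 0 := by
    linear_combination hc0 - hc1 - w.im * e3
  have key3 : w.im * Real.exp (-t) = 1 := by
    rcases mul_eq_zero.1 key2 with h | h
    · linarith
    · exact absurd h hne
  have him : w.im = Real.exp t := by
    have h5 : (w.im - Real.exp t) * Real.exp (-t) = 0 := by
      linear_combination key3 - e1
    rcases mul_eq_zero.1 h5 with h | h
    · linarith
    · exact absurd h (Real.exp_ne_zero _)
  have hre : w.re = 0 := by
    have h6 : w.re^2 = 0 := by
      rw [him] at hc0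
      nlinarith [hc0, e1]
    exact pow_eq_zero_iff (by norm_num) |>.1 h6
  apply UpperHalfPlane.ext
  apply Complex.ext
  · rw [UpperHalfPlane.coe_re, hre]; rfl
  · rw [UpperHalfPlane.coe_im, him]; rfl

lemma geodesic_form (c : ℝ → ℍ) (hc : Isometry c) : ∃ g : SL2, ∀ t, c t = g • std t := by
  have hd : dist (c 0) (c 1) = 1 := by rw [hc.dist_eq, Real.dist_eq]; norm_num
  obtain ⟨g, hg0, hg1⟩ := exists_g_pair (c 0) (c 1)
  rw [hd] at hg1
  have hiso : Isometry (fun t => g • c t) := (isometry_smul ℍ g).comp hc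
  have := geodesic_eq_std (fun t => g • c t) hiso (by simpa using hg0) (by simpa using hg1)
  refine ⟨g⁻¹, fun t => ?_⟩
  rw [← this t]
  simp

/-- Half-turn (rotation by π) about `z`. -/
def Hmat (z : ℍ) : SL2 :=
  ⟨!![z.re/z.im, -(z.re^2+z.im^2)/z.im; 1/z.im, -z.re/z.im], by
    have h : z.im > 0 := z.im_pos
    rw [Matrix.det_fin_two]
    show z.re/z.im * (-z.re/z.im) - -(z.re^2+z.im^2)/z.im * (1/z.im) = 1
    field_simp
    ring⟩

lemma Hmat_coe (z : ℍ) : (Hmat z).1 =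
    !![z.re/z.im, -(z.re^2+z.im^2)/z.im; 1/z.im, -z.re/z.im] := rfl

lemma Hmat_fix (z : ℍ) : Hmat z • z = z := by
  have h : z.im > 0 := z.im_pos
  rw [smul_eq_iff]
  show ((z.re/z.im : ℝ) : ℂ) * z + ((-(z.re^2+z.im^2)/z.im : ℝ) : ℂ) =
    (z : ℂ) * (((1/z.im : ℝ):ℂ) * z + ((-z.re/z.im : ℝ):ℂ))
  have hz : (z : ℂ) = Complex.mk z.re z.im := Complex.ext rfl rfl
  rw [hz]
  apply Complex.ext <;>
    simp only [Complex.add_re, Complex.add_im, Complex.mul_re, Complex.mul_im,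
      Complex.ofReal_re, Complex.ofReal_im] <;>
    field_simp <;> ring

lemma Hmat_tr (z : ℍ) : (Hmat z).1 0 0 + (Hmat z).1 1 1 = 0 := by
  show z.re/z.im + -z.re/z.im = 0
  ring

lemma fin_two_mat_eq (p q r s p' q' r' s' : ℝ) (h1 : p = p') (h2 : q = q') (h3 : r = r')
    (h4 : s = s') : !![p, q; r, s] = !![p', q'; r', s'] := by
  rw [h1, h2, h3, h4]

lemma neg_fin_two_mat (p q r s : ℝ) :
    -(!![p, q; r, s]) = !![-p, -q; -r, -s] := by
  ext i j
  fin_cases i <;> fin_cases j <;> simp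

lemma Hmat_mul_self (z : ℍ) : Hmat z * Hmat z = -1 := by
  have h : z.im > 0 := z.im_pos
  have hne : z.im ≠ 0 := ne_of_gt h
  apply Subtype.ext
  rw [Matrix.SpecialLinearGroup.coe_mul, Hmat_coe, Matrix.mul_fin_two,
    Matrix.SpecialLinearGroup.coe_neg, Matrix.SpecialLinearGroup.coe_one,
    Matrix.one_fin_two, neg_fin_two_mat]
  apply fin_two_mat_eq <;> field_simp <;> ring

lemma trc_conj (g m : SL2) :
    (g * m * g⁻¹).1 0 0 + (g * m * g⁻¹).1 1 1 = m.1 0 0 + m.1 1 1 := by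
  have h : (g⁻¹).1 * g.1 = (1 : Matrix (Fin 2) (Fin 2) ℝ) := by
    rw [← Matrix.SpecialLinearGroup.coe_mul, inv_mul_cancel g,
      Matrix.SpecialLinearGroup.coe_one]
  have h2 : (g * m * g⁻¹).1 = g.1 * m.1 * (g⁻¹).1 := by
    rw [Matrix.SpecialLinearGroup.coe_mul, Matrix.SpecialLinearGroup.coe_mul]
  rw [← Matrix.trace_fin_two, ← Matrix.trace_fin_two, h2, Matrix.trace_mul_comm, ← mul_assoc, h,
    one_mul]

lemma traceless_fix (m : SL2) (z : ℍ) (htr : m.1 0 0 + m.1 1 1 = 0) (hfix : m • z = z) :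
    m = Hmat z ∨ m = -Hmat z := by
  have hy : 0 < z.im := z.im_pos
  have hyne : z.im ≠ 0 := ne_of_gt hy
  rw [smul_eq_iff] at hfix
  have hz : (z : ℂ) = Complex.mk z.re z.im := Complex.ext rfl rfl
  rw [hz] at hfix
  have hre := congrArg Complex.re hfix
  have him := congrArg Complex.im hfix
  simp only [Complex.add_re, Complex.add_im, Complex.mul_re, Complex.mul_im,
    Complex.ofReal_re, Complex.ofReal_im] at hre him
  have hd : m.1 1 1 = -(m.1 0 0) := by linarith [htr]
  have hdet := m.2
  rw [Matrix.det_fin_two] at hdet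
  have hac : m.1 0 0 = m.1 1 0 * z.re := by
    apply mul_right_cancel₀ hyne
    rw [hd] at him
    nlinarith [him]
  have hb : m.1 0 1 = -(m.1 1 0) * (z.re^2 + z.im^2) := by
    rw [hd, hac] at hre
    nlinarith [hre]
  have hcy : (m.1 1 0 * z.im - 1) * (m.1 1 0 * z.im + 1) = 0 := by
    rw [hd, hac, hb] at hdet
    nlinarith [hdet]
  rcases mul_eq_zero.1 hcy with hc1 | hc1
  · left
    have hc : m.1 1 0 = 1/z.im := by field_simp; linarith
    apply Subtype.ext
    rw [Matrix.eta_fin_two m.1, Hmat_coe, hd, hac, hb, hc]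
    apply fin_two_mat_eq <;> field_simp <;> ring
  · right
    have hc : m.1 1 0 = -(1/z.im) := by field_simp; linarith
    apply Subtype.ext
    rw [Matrix.SpecialLinearGroup.coe_neg, Matrix.eta_fin_two m.1, Hmat_coe, hd, hac, hb, hc,
      neg_fin_two_mat]
    apply fin_two_mat_eq <;> field_simp <;> ring

lemma Hmat_std (t : ℝ) : (Hmat (std t)).1 = !![0, -Real.exp t; Real.exp (-t), 0] := by
  rw [Hmat_coe]
  have hre : (std t).re = 0 := rfl
  have him : (std t).im = Real.exp t := rfl
  rw [hre, him]
  apply fin_two_mat_eq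
  · simp
  · have h : Real.exp t ≠ 0 := Real.exp_ne_zero t
    field_simp
    ring
  · rw [Real.exp_neg]; field_simp
  · simp

lemma Hmat_std_mul (s' s : ℝ) :
    Hmat (std s') * Hmat (std s) = -(Dmat (2*(s'-s))) := by
  apply Subtype.ext
  rw [Matrix.SpecialLinearGroup.coe_mul, Hmat_std, Hmat_std, Matrix.mul_fin_two,
    Matrix.SpecialLinearGroup.coe_neg]
  have hD : (Dmat (2*(s'-s))).1 =
      !![Real.exp (2*(s'-s)/2), 0; 0, Real.exp (-(2*(s'-s)/2))] := rfl
  rw [hD, neg_fin_two_mat]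
  have k1 : Real.exp s' * Real.exp (-s) = Real.exp (2*(s'-s)/2) := by
    rw [← Real.exp_add]; congr 1; ring
  have k2 : Real.exp (-s') * Real.exp s = Real.exp (-(2*(s'-s)/2)) := by
    rw [← Real.exp_add]; congr 1; ring
  apply fin_two_mat_eq
  · linarith [k1]
  · ring
  · ring
  · linarith [k2]

lemma Hmat_conj (g : SL2) (z : ℍ) :
    g * Hmat z * g⁻¹ = Hmat (g • z) ∨ g * Hmat z * g⁻¹ = -Hmat (g • z) := by
  apply traceless_fix
  · rw [trc_conj]
    exact Hmat_tr z
  · rw [mul_smul, mul_smul, inv_smul_smul, Hmat_fix]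

lemma pm_mul {x y x' y' : SL2} (hx : x = x' ∨ x = -x') (hy : y = y' ∨ y = -y') :
    x * y = x' * y' ∨ x * y = -(x' * y') := by
  rcases hx with h | h <;> rcases hy with h' | h' <;> rw [h, h']
  · left; rfl
  · right; rw [mul_neg]
  · right; rw [neg_mul]
  · left; rw [neg_mul, mul_neg, neg_neg]

lemma pm_symm {x y : SL2} (h : x = y ∨ x = -y) : y = x ∨ y = -x := by
  rcases h with h | h
  · left; rw [h]
  · right; rw [h, neg_neg]

lemma pm_trans {x y z : SL2} (h1 : x = y ∨ x = -y) (h2 : y = z ∨ y = -z) :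
    x = z ∨ x = -z := by
  rcases h1 with h | h <;> rcases h2 with h' | h'
  · left; rw [h, h']
  · right; rw [h, h']
  · right; rw [h, h']
  · left; rw [h, h', neg_neg]

lemma pm_neg_right {x y : SL2} (h : x = -y ∨ x = -(-y)) : x = y ∨ x = -y := by
  rcases h with h | h
  · right; exact h
  · left; rw [h, neg_neg]

lemma reflection_factor (m g : SL2) (τ : ℝ)
    (h : ∀ t, m • (g • std t) = g • std (t + τ)) (t₀ : ℝ) :
    m = Hmat (g • std (t₀ + τ/2)) * Hmat (g • std t₀) ∨
    m = -(Hmat (g • std (t₀ + τ/2)) * Hmat (g • std t₀)) := by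
  have hm := conj_translate m g τ h
  have hHH : Hmat (std (t₀ + τ/2)) * Hmat (std t₀) = -(Dmat τ) := by
    rw [Hmat_std_mul, show 2*((t₀ + τ/2) - t₀) = τ by ring]
  have hconj : g * (Hmat (std (t₀ + τ/2)) * Hmat (std t₀)) * g⁻¹ =
      (g * Hmat (std (t₀ + τ/2)) * g⁻¹) * (g * Hmat (std t₀) * g⁻¹) := by group
  have hprod : Hmat (g • std (t₀ + τ/2)) * Hmat (g • std t₀) = g * Dmat τ * g⁻¹ ∨
      Hmat (g • std (t₀ + τ/2)) * Hmat (g • std t₀) = -(g * Dmat τ * g⁻¹) := by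
    have h1 := pm_mul (pm_symm (Hmat_conj g (std (t₀ + τ/2)))) (pm_symm (Hmat_conj g (std t₀)))
    rw [← hconj, hHH] at h1
    have h2 : g * -Dmat τ * g⁻¹ = -(g * Dmat τ * g⁻¹) := by
      rw [mul_neg, neg_mul]
    rw [h2] at h1
    exact pm_neg_right h1
  exact pm_trans hm (pm_symm hprod)

lemma hyp_of_trace (m : SL2) (htr : 2 < |m.1 0 0 + m.1 1 1|) : IsHyperbolicIsom m := by
  have hdet : m.1 0 0 * m.1 1 1 - m.1 0 1 * m.1 1 0 = 1 := by
    have := m.2; rwa [Matrix.det_fin_two] at this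
  set a := m.1 0 0 with ha'
  set b := m.1 0 1 with hb'
  set c := m.1 1 0 with hc'
  set d := m.1 1 1 with hd'
  have hdisc : 0 < (a+d)^2 - 4 := by
    nlinarith [sq_abs (a+d), mul_pos (show (0:ℝ) < |a+d| - 2 by linarith)
      (show (0:ℝ) < |a+d| + 2 by linarith [abs_nonneg (a+d)])]
  by_cases hc : c = 0
  · -- c = 0
    have had : a * d = 1 := by rw [← hdet, hc]; ring
    have hdne : d ≠ 0 := by intro h; rw [h] at had; linarith
    have hane : d - a ≠ 0 := by
      intro h
      have hz : (a-d)^2 = 0 := by rw [show a - d = 0 by linarith]; ring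
      nlinarith [hdisc, had, hz]
    have hfixint : ∀ z : ℍ, m • z ≠ z := by
      intro z hz
      rw [smul_eq_iff] at hz
      rw [← ha', ← hb', ← hc', ← hd', hc] at hz
      have him := congrArg Complex.im hz
      simp only [Complex.add_im, Complex.mul_im, Complex.ofReal_re, Complex.ofReal_im,
        Complex.ofReal_zero, zero_mul, zero_add, UpperHalfPlane.coe_im, UpperHalfPlane.coe_re] at him
      have : (d - a) * z.im = 0 := by linarith
      rcases mul_eq_zero.1 this with h | h
      · exact hane h
      · exact absurd h (ne_of_gt z.im_pos)
    refine ⟨⟨std 0, hfixint _⟩, hfixint, none, some (b/(d-a)), by simp, ?_⟩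
    ext p
    match p with
    | none =>
      simp only [Set.mem_setOf_eq, mobius, Set.mem_insert_iff, Set.mem_singleton_iff]
      rw [← hc', if_pos hc]
      simp
    | some x =>
      simp only [Set.mem_setOf_eq, mobius, Set.mem_insert_iff, Set.mem_singleton_iff]
      rw [← hc', ← hd', ← ha', ← hb', hc]
      rw [if_neg (by simpa using hdne)]
      simp only [Option.some.injEq, zero_mul, zero_add]
      constructor
      · intro h
        right
        rw [div_eq_iff hdne] at h
        rw [eq_div_iff hane]
        linarith
      · rintro (h | h)
        · exact absurd h (by simp)
        · rw [h]
          field_simp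
          ring
  · -- c ≠ 0
    have hcC : (c:ℂ) ≠ 0 := by exact_mod_cast hc
    set s := Real.sqrt ((a+d)^2 - 4) with hs'
    have hs : s^2 = (a+d)^2 - 4 := Real.sq_sqrt hdisc.le
    have hspos : 0 < s := Real.sqrt_pos.2 hdisc
    set r₁ := ((a-d) + s)/(2*c) with hr₁
    set r₂ := ((a-d) - s)/(2*c) with hr₂
    have hfacC : ∀ x : ℂ, (c:ℂ)*x^2 + ((d:ℂ)-(a:ℂ))*x - (b:ℂ) =
        (c:ℂ)*(x - (r₁:ℂ))*(x - (r₂:ℂ)) := by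
      intro x
      rw [hr₁, hr₂]
      push_cast
      have hsC : (s:ℂ)^2 = ((a:ℂ)+d)^2 - 4 := by exact_mod_cast hs
      have hdetC : (a:ℂ)*d - b*c = 1 := by exact_mod_cast hdet
      field_simp
      ring_nf
      linear_combination hsC + 4*hdetC
    have hfacR : ∀ x : ℝ, c*x^2 + (d-a)*x - b = c*(x - r₁)*(x - r₂) := by
      intro x
      exact_mod_cast hfacC (x:ℂ)
    have hfixint : ∀ z : ℍ, m • z ≠ z := by
      intro z hz
      rw [smul_eq_iff] at hz
      rw [← ha', ← hb', ← hc', ← hd'] at hz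
      have hquad : (c:ℂ)*(z:ℂ)^2 + ((d:ℂ)-(a:ℂ))*(z:ℂ) - (b:ℂ) = 0 := by
        linear_combination -hz
      rw [hfacC] at hquad
      rcases mul_eq_zero.1 hquad with h | h
      · rcases mul_eq_zero.1 h with h | h
        · exact hcC h
        · have := congrArg Complex.im (sub_eq_zero.1 h)
          simp only [UpperHalfPlane.coe_im, Complex.ofReal_im] at this
          exact absurd this (ne_of_gt z.im_pos)
      · have := congrArg Complex.im (sub_eq_zero.1 h)
        simp only [UpperHalfPlane.coe_im, Complex.ofReal_im] at this
        exact absurd this (ne_of_gt z.im_pos)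
    have hr12 : r₁ ≠ r₂ := by
      intro h
      rw [hr₁, hr₂, div_eq_div_iff (by simpa using hc) (by simpa using hc)] at h
      have : s * (2*c) = -s * (2*c) := by linarith [h]
      have h2 : s = -s := mul_right_cancel₀ (by simpa using hc) this
      linarith
    have hroot : ∀ x : ℝ, (c*x^2 + (d-a)*x - b = 0) ↔ (x = r₁ ∨ x = r₂) := by
      intro x
      rw [hfacR]
      constructor
      · intro h
        rcases mul_eq_zero.1 h with h | h
        · rcases mul_eq_zero.1 h with h | h
          · exact absurd h hc
          · exact Or.inl (by linarith [sub_eq_zero.1 h])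
        · exact Or.inr (by linarith [sub_eq_zero.1 h])
      · rintro (h | h) <;> rw [h] <;> ring
    refine ⟨⟨std 0, hfixint _⟩, hfixint, some r₁, some r₂, by simpa using hr12, ?_⟩
    ext p
    match p with
    | none =>
      simp only [Set.mem_setOf_eq, mobius, Set.mem_insert_iff, Set.mem_singleton_iff]
      rw [← hc', ← ha', if_neg hc]
      simp
    | some x =>
      simp only [Set.mem_setOf_eq, mobius, Set.mem_insert_iff, Set.mem_singleton_iff]
      rw [← hc', ← hd', ← ha', ← hb']
      by_cases hden : c * x + d = 0
      · rw [if_pos hden]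
        simp only [Option.some.injEq]
        constructor
        · intro h; exact absurd h (by simp)
        · rintro (h | h) <;> exfalso
          · have hq : c*x^2 + (d-a)*x - b = 0 := (hroot x).2 (Or.inl h)
            have h0 : (1:ℝ) = 0 := by linear_combination c*hq - (c*x - a)*hden - hdet
            linarith
          · have hq : c*x^2 + (d-a)*x - b = 0 := (hroot x).2 (Or.inr h)
            have h0 : (1:ℝ) = 0 := by linear_combination c*hq - (c*x - a)*hden - hdet
            linarith
      · rw [if_neg hden]
        simp only [Option.some.injEq]
        rw [div_eq_iff hden]
        constructor
        · intro h
          have : c*x^2 + (d-a)*x - b = 0 := by linear_combination -h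
          rcases (hroot x).1 this with h | h
          · left; rw [h]
          · right; rw [h]
        · rintro (h | h)
          · have hq := (hroot x).2 (Or.inl h)
            linear_combination -hq
          · have hq := (hroot x).2 (Or.inr h)
            linear_combination -hq

lemma trc_Dmat (τ : ℝ) : (Dmat τ).1 0 0 + (Dmat τ).1 1 1 = Real.exp (τ/2) + Real.exp (-(τ/2)) := by
  show Real.exp (τ/2) + _ = _
  congr 1

lemma trc_neg (m : SL2) : (-m).1 0 0 + (-m).1 1 1 = -(m.1 0 0 + m.1 1 1) := by
  rw [Matrix.SpecialLinearGroup.coe_neg]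
  simp [Matrix.neg_apply]
  ring

/-- If the axes of hyperbolic `α`, `β` meet at `P`, let `Q`
be the point of `A_α` at distance `τ_α/2` from `P` in the positive direction
and `R` the point of `A_β` at distance `τ_β/2` from `P` in the negative
direction.  Then `αβ` is hyperbolic, its (oriented) axis passes through `R`
and then `Q`, and `d(Q,R) = τ_{αβ}/2`. -/
theorem axis_of_product (α β : SL2)
    (hα : IsHyperbolicIsom α) (hβ : IsHyperbolicIsom β)
    (cα cβ : ℝ → ℍ) (hcα : IsAxisOf cα α (transLength α))
    (hcβ : IsAxisOf cβ β (transLength β))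
    (P : ℍ) (hP : axisSet α ∩ axisSet β = {P})
    (tP sP : ℝ) (htP : cα tP = P) (hsP : cβ sP = P) :
    IsHyperbolicIsom (α * β) ∧
    dist (cα (tP + transLength α / 2)) (cβ (sP - transLength β / 2)) =
      transLength (α * β) / 2 ∧
    ∃ c : ℝ → ℍ, IsAxisOf c (α * β) (transLength (α * β)) ∧
      c 0 = cβ (sP - transLength β / 2) ∧
      c (transLength (α * β) / 2) = cα (tP + transLength α / 2) := by
  obtain ⟨hisoα, hτα, htα⟩ := hcα
  obtain ⟨hisoβ, hτβ, htβ⟩ := hcβ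
  obtain ⟨gα, hgα⟩ := geodesic_form cα hisoα
  obtain ⟨gβ, hgβ⟩ := geodesic_form cβ hisoβ
  have hα2 : ∀ t, α • (gα • std t) = gα • std (t + transLength α) := by
    intro t; rw [← hgα, ← hgα]; exact htα t
  have hβ2 : ∀ t, β • (gβ • std t) = gβ • std (t + transLength β) := by
    intro t; rw [← hgβ, ← hgβ]; exact htβ t
  have hfα := reflection_factor α gα (transLength α) hα2 tP
  rw [← hgα, ← hgα, htP] at hfα
  have hfβ := reflection_factor β gβ (transLength β) hβ2 (sP - transLength β / 2)
  rw [← hgβ, ← hgβ, show sP - transLength β/2 + transLength β/2 = sP by ring, hsP] at hfβ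
  set Q := cα (tP + transLength α / 2) with hQdef
  set R := cβ (sP - transLength β / 2) with hRdef
  -- product factorization
  have hfαβ : α * β = Hmat Q * Hmat R ∨ α * β = -(Hmat Q * Hmat R) := by
    have h1 := pm_mul hfα hfβ
    have h3 : (Hmat Q * Hmat P) * (Hmat P * Hmat R) = -(Hmat Q * Hmat R) := by
      calc (Hmat Q * Hmat P) * (Hmat P * Hmat R) = Hmat Q * (Hmat P * Hmat P) * Hmat R := by
            group
      _ = Hmat Q * (-1) * Hmat R := by rw [Hmat_mul_self P]
      _ = -(Hmat Q * Hmat R) := by simp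
    rw [h3] at h1
    exact pm_neg_right h1
  -- Q ≠ R
  have hQR : R ≠ Q := by
    intro h
    have hQmemα : Q ∈ axisSet α := ⟨cα, tP + transLength α/2, ⟨hisoα, hτα, htα⟩, rfl⟩
    have hRmemβ : R ∈ axisSet β := ⟨cβ, sP - transLength β/2, ⟨hisoβ, hτβ, htβ⟩, rfl⟩
    have hQboth : Q ∈ axisSet α ∩ axisSet β := ⟨hQmemα, h ▸ hRmemβ⟩
    rw [hP] at hQboth
    have hQP : Q = P := hQboth
    have h2 : cα (tP + transLength α/2) = cα tP := by rw [← hQdef, hQP, ← htP]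
    have h3 := hisoα.injective h2
    linarith [h3]
  have hδpos : 0 < dist R Q := dist_pos.2 hQR
  obtain ⟨h, hhR, hhQ⟩ := exists_g_pair R Q
  set δ := dist R Q with hδdef
  have hQeq : Q = h⁻¹ • std δ := by rw [← hhQ, inv_smul_smul]
  have hReq : R = h⁻¹ • std 0 := by rw [← hhR, inv_smul_smul]
  have hHQR : Hmat Q * Hmat R = h⁻¹ * Dmat (2*δ) * (h⁻¹)⁻¹ ∨
      Hmat Q * Hmat R = -(h⁻¹ * Dmat (2*δ) * (h⁻¹)⁻¹) := by
    rw [hQeq, hReq]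
    have h1 := pm_mul (pm_symm (Hmat_conj h⁻¹ (std δ))) (pm_symm (Hmat_conj h⁻¹ (std 0)))
    have h2 : (h⁻¹ * Hmat (std δ) * (h⁻¹)⁻¹) * (h⁻¹ * Hmat (std 0) * (h⁻¹)⁻¹) =
        -(h⁻¹ * Dmat (2*δ) * (h⁻¹)⁻¹) := by
      have h3 : Hmat (std δ) * Hmat (std 0) = -(Dmat (2*δ)) := by
        rw [Hmat_std_mul, show 2*(δ - 0) = 2*δ by ring]
      calc (h⁻¹ * Hmat (std δ) * (h⁻¹)⁻¹) * (h⁻¹ * Hmat (std 0) * (h⁻¹)⁻¹) =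
          h⁻¹ * (Hmat (std δ) * Hmat (std 0)) * (h⁻¹)⁻¹ := by group
      _ = h⁻¹ * (-(Dmat (2*δ))) * (h⁻¹)⁻¹ := by rw [h3]
      _ = -(h⁻¹ * Dmat (2*δ) * (h⁻¹)⁻¹) := by rw [mul_neg, neg_mul]
    rw [h2] at h1
    exact pm_neg_right h1
  have hm := pm_trans hfαβ hHQR
  -- translation length of the product
  have hTL : transLength (α * β) = 2*δ := by
    rcases hm with h1 | h1 <;> rw [h1]
    · rw [transLength_conj, transLength_Dmat _ (by linarith [hδpos])]
    · rw [transLength_neg, transLength_conj, transLength_Dmat _ (by linarith [hδpos])]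
  -- trace of the product
  have htrace : 2 < |(α*β).1 0 0 + (α*β).1 1 1| := by
    have hD : (Dmat (2*δ)).1 0 0 + (Dmat (2*δ)).1 1 1 = Real.exp δ + Real.exp (-δ) := by
      rw [trc_Dmat, show 2*δ/2 = δ by ring]
    have hcosh : 2 < Real.exp δ + Real.exp (-δ) := by
      have h1 : Real.cosh 0 < Real.cosh δ := by
        rw [Real.cosh_lt_cosh, abs_zero, abs_of_pos hδpos]
        exact hδpos
      rw [Real.cosh_zero, Real.cosh_eq] at h1
      linarith
    rcases hm with h1 | h1 <;> rw [h1]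
    · rw [trc_conj, hD, abs_of_pos (by positivity)]
      exact hcosh
    · rw [trc_neg, trc_conj, hD, abs_neg, abs_of_pos (by positivity)]
      exact hcosh
  refine ⟨hyp_of_trace _ htrace, ?_, ?_⟩
  · rw [hTL, dist_comm Q R, ← hδdef]
    ring
  · refine ⟨fun t => h⁻¹ • std t, ⟨?_, ?_, ?_⟩, ?_, ?_⟩
    · exact (isometry_smul ℍ h⁻¹).comp isometry_std
    · rw [hTL]; linarith [hδpos]
    · intro t
      rw [hTL]
      have key : (h⁻¹ * Dmat (2*δ) * (h⁻¹)⁻¹) • (h⁻¹ • std t) = h⁻¹ • std (t + 2*δ) := by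
        rw [mul_smul, mul_smul, inv_inv, smul_inv_smul, Dmat_smul]
      rcases hm with h1 | h1 <;> rw [h1]
      · exact key
      · rw [neg_smul_SL]; exact key
    · exact hReq.symm
    · rw [hTL, show 2*δ/2 = δ by ring]
      exact hQeq.symm

end
end

section
/- Let T be a geodesic triangle in ℍ² and consider the path consisting of two consecutive sides of T meeting at an angle θ ∈ (0, π). Then this concatenated path is a K(θ)-quasi-geodesic, where K(θ) = 1/sin θ + 1/tan θ + 1 when θ ∈ (0, π/2), and K(θ) = 1/sin θ + 1 when θ ∈ [π/2, π). -/
/- Setup: the hyperbolic plane ℍ (upper half-plane model with its hyperbolic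
metric), orientation-preserving isometries identified with elements of
SL(2,ℝ) acting by Möbius transformations (so that PSL(2,ℝ) = SL(2,ℝ)/{±1} is
the isometry group), the ideal boundary ℝ ∪ {∞}, geodesics, axes,
translation lengths, quasi-geodesics, Fuchsian groups and the Goldman
bracket machinery. -/

noncomputable section
open Set UpperHalfPlane ENNReal Metric

namespace QGAux

/-! ### Auxiliary development: hyperboloid model of `ℍ` and the
hyperbolic law of cosines, leading to the quasi-geodesic estimate. -/

/-- Hyperboloid-model coordinates of a point of `ℍ`. -/
def mP (z : ℍ) : ℝ := (z.re^2 + z.im^2 + 1)/(2*z.im)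
def mQ (z : ℍ) : ℝ := (z.re^2 + z.im^2 - 1)/(2*z.im)
def mR (z : ℍ) : ℝ := z.re/z.im

lemma cosh_dist_mink (z w : ℍ) :
    Real.cosh (dist z w) = mP z * mP w - mQ z * mQ w - mR z * mR w := by
  rw [UpperHalfPlane.cosh_dist']
  have hz := z.im_pos.ne'
  have hw := w.im_pos.ne'
  rw [mP, mQ, mR, mP, mQ, mR]
  field_simp
  ring

lemma mink_self (z : ℍ) : mP z * mP z - mQ z * mQ z - mR z * mR z = 1 := by
  have h := cosh_dist_mink z z
  rw [dist_self, Real.cosh_zero] at h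
  exact h.symm

lemma mP_sub_mQ (z : ℍ) : mP z - mQ z = 1/z.im := by
  have hz := z.im_pos.ne'
  rw [mP, mQ, div_sub_div_same, div_eq_div_iff (by positivity) hz]
  ring

lemma null_orth (p0 q0 r0 e1 e2 e3 : ℝ) (h00 : p0*p0 - q0*q0 - r0*r0 = 1)
    (hnull : e1^2 - e2^2 - e3^2 = 0) (horth : e1*p0 - e2*q0 - e3*r0 = 0) :
    e1 = 0 ∧ e2 = 0 ∧ e3 = 0 := by
  have hCS : (e2*q0 + e3*r0)^2 ≤ (e2^2 + e3^2)*(q0^2 + r0^2) := by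
    nlinarith [sq_nonneg (e2*r0 - e3*q0)]
  have hEqn : (e2^2 + e3^2)*(1 + q0^2 + r0^2) = (e2*q0 + e3*r0)^2 := by
    linear_combination (-(1+q0^2+r0^2))*hnull - e1^2*h00 + (e1*p0 + e2*q0 + e3*r0)*horth
  have hqr : e2^2 + e3^2 ≤ 0 := by nlinarith
  have h2 : e2 = 0 := by nlinarith [sq_nonneg e2, sq_nonneg e3]
  have h3 : e3 = 0 := by nlinarith [sq_nonneg e2, sq_nonneg e3]
  have h1 : e1 = 0 := by nlinarith [sq_nonneg e1]
  exact ⟨h1, h2, h3⟩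

lemma interp (t p0 q0 r0 p1 q1 r1 pt qt rt : ℝ)
    (h00 : p0*p0 - q0*q0 - r0*r0 = 1)
    (h11 : p1*p1 - q1*q1 - r1*r1 = 1)
    (htt : pt*pt - qt*qt - rt*rt = 1)
    (h01 : p0*p1 - q0*q1 - r0*r1 = Real.cosh 1)
    (h0t : p0*pt - q0*qt - r0*rt = Real.cosh t)
    (h1t : p1*pt - q1*qt - r1*rt = Real.cosh (t-1)) :
    pt = Real.cosh t * p0 + Real.sinh t * ((p1 - Real.cosh 1 * p0)/Real.sinh 1) ∧
    qt = Real.cosh t * q0 + Real.sinh t * ((q1 - Real.cosh 1 * q0)/Real.sinh 1) ∧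
    rt = Real.cosh t * r0 + Real.sinh t * ((r1 - Real.cosh 1 * r0)/Real.sinh 1) := by
  set c1 := Real.cosh 1 with hc1
  set s1 := Real.sinh 1 with hs1
  set ct := Real.cosh t with hct
  set st := Real.sinh t with hst
  have hs1pos : 0 < s1 := by rw [hs1]; exact Real.sinh_pos_iff.2 one_pos
  have py1 : c1^2 - s1^2 = 1 := Real.cosh_sq_sub_sinh_sq 1
  have pyt : ct^2 - st^2 = 1 := Real.cosh_sq_sub_sinh_sq t
  have hsub : Real.cosh (t-1) = ct*c1 - st*s1 := Real.cosh_sub t 1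
  rw [hsub] at h1t
  have hE1 : (s1*pt - (ct*s1 - st*c1)*p0 - st*p1)^2
      - (s1*qt - (ct*s1 - st*c1)*q0 - st*q1)^2
      - (s1*rt - (ct*s1 - st*c1)*r0 - st*r1)^2 = 0 := by
    linear_combination (s1^2)*htt + ((ct*s1-st*c1)^2)*h00 + (st^2)*h11
      - (2*s1*(ct*s1-st*c1))*h0t - (2*s1*st)*h1t + (2*(ct*s1-st*c1)*st)*h01
      - (s1^2)*pyt - (st^2)*py1
  have hE2 : (s1*pt - (ct*s1 - st*c1)*p0 - st*p1)*p0
      - (s1*qt - (ct*s1 - st*c1)*q0 - st*q1)*q0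
      - (s1*rt - (ct*s1 - st*c1)*r0 - st*r1)*r0 = 0 := by
    linear_combination s1*h0t - (ct*s1-st*c1)*h00 - st*h01
  obtain ⟨hep0, heq0, her0⟩ := null_orth p0 q0 r0 _ _ _ h00 hE1 hE2
  refine ⟨?_, ?_, ?_⟩
  · field_simp
    linear_combination hep0
  · field_simp
    linear_combination heq0
  · field_simp
    linear_combination her0

lemma geodesic_coords (c : ℝ → ℍ) (hc : Isometry c) (t₀ : ℝ) :
    ∃ pw qw rw : ℝ,
      pw*pw - qw*qw - rw*rw = -1 ∧
      mP (c t₀)*pw - mQ (c t₀)*qw - mR (c t₀)*rw = 0 ∧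
      ∀ t : ℝ, mP (c (t₀+t)) = Real.cosh t * mP (c t₀) + Real.sinh t * pw ∧
        mQ (c (t₀+t)) = Real.cosh t * mQ (c t₀) + Real.sinh t * qw ∧
        mR (c (t₀+t)) = Real.cosh t * mR (c t₀) + Real.sinh t * rw := by
  have prod : ∀ s t : ℝ, mP (c (t₀+s)) * mP (c (t₀+t)) - mQ (c (t₀+s)) * mQ (c (t₀+t))
      - mR (c (t₀+s)) * mR (c (t₀+t)) = Real.cosh (s - t) := by
    intro s t
    rw [← cosh_dist_mink, hc.dist_eq, Real.dist_eq]
    · rw [Real.cosh_abs]; ring_nf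
  have hs1pos : (0:ℝ) < Real.sinh 1 := Real.sinh_pos_iff.2 one_pos
  refine ⟨(mP (c (t₀+1)) - Real.cosh 1 * mP (c t₀))/Real.sinh 1,
      (mQ (c (t₀+1)) - Real.cosh 1 * mQ (c t₀))/Real.sinh 1,
      (mR (c (t₀+1)) - Real.cosh 1 * mR (c t₀))/Real.sinh 1, ?_, ?_, ?_⟩
  · have h00 := prod 0 0
    have h11 := prod 1 1
    have h01 := prod 0 1
    simp only [sub_self, Real.cosh_zero, zero_sub, Real.cosh_neg] at h00 h11 h01
    have py1 : Real.cosh 1 ^2 - Real.sinh 1^2 = 1 := Real.cosh_sq_sub_sinh_sq 1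
    rw [show t₀ + 0 = t₀ by ring] at h00 h01
    field_simp
    linear_combination h11 - 2*Real.cosh 1 * h01 + Real.cosh 1^2 * h00 - py1
  · have h00 := prod 0 0
    have h01 := prod 0 1
    simp only [sub_self, Real.cosh_zero, zero_sub, Real.cosh_neg] at h00 h01
    rw [show t₀ + 0 = t₀ by ring] at h00 h01
    field_simp
    linear_combination h01 - Real.cosh 1 * h00
  · intro t
    have h00 := prod 0 0
    have h11 := prod 1 1
    have htt := prod t t
    have h01 := prod 0 1
    have h0t := prod 0 t
    have h1t := prod 1 t
    simp only [sub_self, Real.cosh_zero, zero_sub, Real.cosh_neg] at h00 h11 htt h01 h0t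
    rw [show t₀ + 0 = t₀ by ring] at h00 h01 h0t
    rw [show (1:ℝ) - t = -(t-1) by ring, Real.cosh_neg] at h1t
    exact interp t _ _ _ _ _ _ _ _ _ h00 h11 htt h01 h0t h1t

lemma geodesic_complex (c : ℝ → ℍ) (t₀ : ℝ) (pw qw rw : ℝ)
    (hco : ∀ t : ℝ, mP (c (t₀+t)) = Real.cosh t * mP (c t₀) + Real.sinh t * pw ∧
        mQ (c (t₀+t)) = Real.cosh t * mQ (c t₀) + Real.sinh t * qw ∧
        mR (c (t₀+t)) = Real.cosh t * mR (c t₀) + Real.sinh t * rw) :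
    dir c t₀ = Complex.ofReal (c t₀).im *
      (Complex.ofReal (rw - (c t₀).re*(pw-qw)) +
       Complex.ofReal (-(c t₀).im*(pw-qw)) * Complex.I) := by
  set y₀ := (c t₀).im with hy₀
  set x₀ := (c t₀).re with hx₀
  have hy₀pos : 0 < y₀ := (c t₀).im_pos
  set d₀ : ℝ := mP (c t₀) - mQ (c t₀) with hd₀
  have hd₀' : d₀ = 1/y₀ := mP_sub_mQ _
  have hr₀ : mR (c t₀) = x₀/y₀ := rfl
  set δ : ℝ := pw - qw with hδ
  set D : ℝ → ℝ := fun u => Real.cosh u * d₀ + Real.sinh u * δ with hD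
  set R : ℝ → ℝ := fun u => Real.cosh u * mR (c t₀) + Real.sinh u * rw with hR
  have hDpos : ∀ u : ℝ, D u = 1/(c (t₀+u)).im := by
    intro u
    have h := hco u
    have := mP_sub_mQ (c (t₀+u))
    rw [h.1, h.2.1] at this
    rw [hD]; dsimp only; rw [hd₀, hδ]; linarith [this]
  have hRe : ∀ u : ℝ, R u = (c (t₀+u)).re / (c (t₀+u)).im := by
    intro u
    have h := (hco u).2.2
    rw [hR]; dsimp only; rw [← h]; rfl
  have hfun : ∀ s : ℝ, ((c s : ℂ)) =
      (Complex.ofReal (R (s - t₀)) + Complex.I) / Complex.ofReal (D (s - t₀)) := by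
    intro s
    have him : (c (t₀+(s-t₀))).im = (c s).im := by rw [show t₀+(s-t₀) = s by ring]
    have hre : (c (t₀+(s-t₀))).re = (c s).re := by rw [show t₀+(s-t₀) = s by ring]
    have hD1 := hDpos (s-t₀)
    have hR1 := hRe (s-t₀)
    rw [him] at hD1; rw [him, hre] at hR1
    have himpos : (0:ℝ) < (c s).im := (c s).im_pos
    apply Complex.ext
    · rw [Complex.div_ofReal_re, Complex.add_re, Complex.ofReal_re, Complex.I_re, hD1, hR1]
      rw [UpperHalfPlane.coe_re]
      field_simp
      ring
    · rw [Complex.div_ofReal_im, Complex.add_im, Complex.ofReal_im, Complex.I_im, hD1]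
      rw [UpperHalfPlane.coe_im]
      field_simp
      ring
  have hsub : HasDerivAt (fun s : ℝ => s - t₀) 1 t₀ := (hasDerivAt_id t₀).sub_const t₀
  have hcosh : HasDerivAt (fun s : ℝ => Real.cosh (s - t₀)) 0 t₀ := by
    simpa using hsub.cosh
  have hsinh : HasDerivAt (fun s : ℝ => Real.sinh (s - t₀)) 1 t₀ := by
    simpa using hsub.sinh
  have hDd : HasDerivAt (fun s : ℝ => D (s - t₀)) δ t₀ := by
    have := ((hcosh.mul_const d₀).add (hsinh.mul_const δ))
    rw [zero_mul, one_mul, zero_add] at this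
    exact this
  have hRd : HasDerivAt (fun s : ℝ => R (s - t₀)) rw t₀ := by
    have := ((hcosh.mul_const (mR (c t₀))).add (hsinh.mul_const rw))
    rw [zero_mul, one_mul, zero_add] at this
    exact this
  have hD0 : D (t₀ - t₀) = d₀ := by rw [hD]; simp
  have hR0 : R (t₀ - t₀) = mR (c t₀) := by rw [hR]; simp
  have hne : (Complex.ofReal (D (t₀ - t₀)) : ℂ) ≠ 0 := by
    rw [hD0]
    simp only [ne_eq, Complex.ofReal_eq_zero]
    rw [hd₀']
    positivity
  have hnum : HasDerivAt (fun s : ℝ => Complex.ofReal (R (s - t₀)) + Complex.I)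
      (Complex.ofReal rw) t₀ := (hRd.ofReal_comp).add_const Complex.I
  have hden : HasDerivAt (fun s : ℝ => (Complex.ofReal (D (s - t₀)) : ℂ))
      (Complex.ofReal δ) t₀ := hDd.ofReal_comp
  have hdiv := hnum.div hden hne
  have hder : HasDerivAt (fun s : ℝ => ((c s : ℂ)))
      ((Complex.ofReal rw * Complex.ofReal (D (t₀ - t₀)) -
        (Complex.ofReal (R (t₀ - t₀)) + Complex.I) * Complex.ofReal δ) /
        Complex.ofReal (D (t₀ - t₀)) ^ 2) t₀ := by
    have hfe : (fun s : ℝ => ((c s : ℂ))) =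
        fun s => (Complex.ofReal (R (s - t₀)) + Complex.I) / Complex.ofReal (D (s - t₀)) :=
      funext hfun
    rw [hfe]
    exact hdiv
  rw [dir, hder.deriv, hD0, hR0, hr₀, hd₀']
  have hy₀ne : (y₀:ℝ) ≠ 0 := hy₀pos.ne'
  have : (Complex.ofReal y₀ : ℂ) ≠ 0 := by simpa using hy₀ne
  push_cast
  field_simp
  ring

lemma mink_tangent_pair (x0 y0 pw1 qw1 rw1 pw2 qw2 rw2 : ℝ)
    (h1 : (x0^2+y0^2+1)*pw1 - (x0^2+y0^2-1)*qw1 - (2*x0)*rw1 = 0)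
    (h2 : (x0^2+y0^2+1)*pw2 - (x0^2+y0^2-1)*qw2 - (2*x0)*rw2 = 0) :
    -(pw1*pw2 - qw1*qw2 - rw1*rw2) =
      (rw1 - x0*(pw1-qw1))*(rw2 - x0*(pw2-qw2)) + (-(y0*(pw1-qw1)))*(-(y0*(pw2-qw2))) := by
  linear_combination (-(pw2-qw2)/2)*h1 + (-(pw1-qw1)/2)*h2

lemma law_of_cosines (c₁ c₂ : ℝ → ℍ) (h₁ : Isometry c₁) (h₂ : Isometry c₂) (d : ℝ)
    (hQ : c₁ d = c₂ 0) (θ : ℝ)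
    (hangle : |vecAngle (-(dir c₁ d)) (dir c₂ 0)| = θ) (a b : ℝ) :
    Real.cosh (dist (c₁ (d - a)) (c₂ b)) =
      Real.cosh a * Real.cosh b - Real.cos θ * (Real.sinh a * Real.sinh b) := by
  obtain ⟨p1, q1, r1, hn1, ho1, hco1⟩ := geodesic_coords c₁ h₁ d
  obtain ⟨p2, q2, r2, hn2, ho2, hco2⟩ := geodesic_coords c₂ h₂ 0
  set z₀ := c₁ d with hz₀
  have hx0 : (c₂ 0).re = z₀.re := by rw [hQ]
  have hy0 : (c₂ 0).im = z₀.im := by rw [hQ]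
  set x₀ := z₀.re with hx₀
  set y₀ := z₀.im with hy₀
  have hy₀pos : 0 < y₀ := z₀.im_pos
  -- cleared orthogonality conditions
  have hmPz : mP z₀ = (x₀^2+y₀^2+1)/(2*y₀) := rfl
  have hmQz : mQ z₀ = (x₀^2+y₀^2-1)/(2*y₀) := rfl
  have hmRz : mR z₀ = x₀/y₀ := rfl
  have hQ2 : c₂ 0 = z₀ := hQ.symm
  rw [hQ2] at ho2 hco2
  have hE1 : (x₀^2+y₀^2+1)*p1 - (x₀^2+y₀^2-1)*q1 - (2*x₀)*r1 = 0 := by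
    rw [hmPz, hmQz, hmRz] at ho1
    field_simp at ho1
    have h' : y₀ * ((x₀^2+y₀^2+1)*p1 - (x₀^2+y₀^2-1)*q1 - (2*x₀)*r1) = 0 := by
      linear_combination y₀ * ho1
    exact (mul_eq_zero.1 h').resolve_left hy₀pos.ne'
  have hE2 : (x₀^2+y₀^2+1)*p2 - (x₀^2+y₀^2-1)*q2 - (2*x₀)*r2 = 0 := by
    rw [hmPz, hmQz, hmRz] at ho2
    field_simp at ho2
    have h' : y₀ * ((x₀^2+y₀^2+1)*p2 - (x₀^2+y₀^2-1)*q2 - (2*x₀)*r2) = 0 := by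
      linear_combination y₀ * ho2
    exact (mul_eq_zero.1 h').resolve_left hy₀pos.ne'
  -- tangent components
  set a₁ := r1 - x₀*(p1-q1) with ha₁
  set b₁ := -(y₀*(p1-q1)) with hb₁
  set a₂ := r2 - x₀*(p2-q2) with ha₂
  set b₂ := -(y₀*(p2-q2)) with hb₂
  have hnorm1 : a₁^2 + b₁^2 = 1 := by
    have := mink_tangent_pair x₀ y₀ p1 q1 r1 p1 q1 r1 hE1 hE1
    rw [hn1] at this
    rw [ha₁, hb₁]; linear_combination -this
  have hnorm2 : a₂^2 + b₂^2 = 1 := by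
    have := mink_tangent_pair x₀ y₀ p2 q2 r2 p2 q2 r2 hE2 hE2
    rw [hn2] at this
    rw [ha₂, hb₂]; linear_combination -this
  have hpair : -(p1*p2 - q1*q2 - r1*r2) = a₁*a₂ + b₁*b₂ :=
    mink_tangent_pair x₀ y₀ p1 q1 r1 p2 q2 r2 hE1 hE2
  -- directions
  have hd1 : dir c₁ d = Complex.ofReal y₀ * (Complex.ofReal a₁ + Complex.ofReal b₁ * Complex.I) := by
    have := geodesic_complex c₁ d p1 q1 r1 hco1
    rw [this]; rw [ha₁, hb₁]; norm_num
    rfl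
  have hd2 : dir c₂ 0 = Complex.ofReal y₀ * (Complex.ofReal a₂ + Complex.ofReal b₂ * Complex.I) := by
    have := geodesic_complex c₂ 0 p2 q2 r2 (by rw [hQ2]; exact hco2)
    rw [this, hQ2]; rw [ha₂, hb₂]; norm_num
    rfl
  -- the unit complex numbers
  set u₁ : ℂ := Complex.ofReal a₁ + Complex.ofReal b₁ * Complex.I with hu₁
  set u₂ : ℂ := Complex.ofReal a₂ + Complex.ofReal b₂ * Complex.I with hu₂
  have habs1 : ‖u₁‖ = 1 := by
    rw [hu₁, Complex.norm_def, Complex.normSq_add_mul_I, hnorm1, Real.sqrt_one]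
  have habs2 : ‖u₂‖ = 1 := by
    rw [hu₂, Complex.norm_def, Complex.normSq_add_mul_I, hnorm2, Real.sqrt_one]
  have hu1ne : u₁ ≠ 0 := by
    intro h; rw [h] at habs1; simp at habs1
  have hu2ne : u₂ ≠ 0 := by
    intro h; rw [h] at habs2; simp at habs2
  have hy₀C : (Complex.ofReal y₀ : ℂ) ≠ 0 := by
    simp only [ne_eq, Complex.ofReal_eq_zero]; exact hy₀pos.ne'
  have hdir1ne : -(dir c₁ d) ≠ 0 := by
    rw [hd1]; simp only [neg_ne_zero]; exact mul_ne_zero hy₀C hu1ne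
  -- ζ and its properties
  set ζ : ℂ := dir c₂ 0 / (-(dir c₁ d)) with hζdef
  have hns1 : Complex.normSq u₁ = 1 := by rw [hu₁, Complex.normSq_add_mul_I, hnorm1]
  have hinv : u₁⁻¹ = Complex.ofReal a₁ - Complex.ofReal b₁ * Complex.I := by
    rw [Complex.inv_def, hns1, hu₁]
    simp [Complex.conj_ofReal, sub_eq_add_neg]
  have hne' : (-(Complex.ofReal y₀ * u₁)) ≠ 0 := by
    simp only [neg_ne_zero]
    exact mul_ne_zero hy₀C hu1ne
  have hζ : ζ = -(u₂ * (Complex.ofReal a₁ - Complex.ofReal b₁ * Complex.I)) := by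
    rw [← hinv, hζdef, hd1, hd2, div_eq_iff hne']
    field_simp [hu1ne]
  have habsζ : ‖ζ‖ = 1 := by
    rw [hζ, norm_neg, norm_mul, habs2]
    have : ‖Complex.ofReal a₁ - Complex.ofReal b₁ * Complex.I‖ = 1 := by
      rw [Complex.norm_def]
      rw [show Complex.ofReal a₁ - Complex.ofReal b₁ * Complex.I
        = Complex.ofReal a₁ + Complex.ofReal (-b₁) * Complex.I by push_cast; ring]
      rw [Complex.normSq_add_mul_I]
      rw [show a₁^2 + (-b₁)^2 = a₁^2 + b₁^2 by ring, hnorm1, Real.sqrt_one]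
    rw [this, mul_one]
  have hζne : ζ ≠ 0 := by
    intro h; rw [h] at habsζ; simp at habsζ
  have hζre : ζ.re = -(a₁*a₂ + b₁*b₂) := by
    rw [hζ, hu₂]
    simp [Complex.mul_re, Complex.add_re, Complex.sub_re, Complex.ofReal_re, Complex.ofReal_im,
      Complex.mul_im, Complex.add_im, Complex.sub_im, Complex.I_re, Complex.I_im]
    ring
  have hcosθ : Real.cos θ = p1*p2 - q1*q2 - r1*r2 := by
    rw [← hangle, vecAngle, Real.cos_abs, ← hζdef, Complex.cos_arg hζne, habsζ, hζre, hpair.symm]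
    ring
  -- final law of cosines
  have hX := hco1 (-a)
  have hY := hco2 b
  rw [show d + -a = d - a by ring, Real.cosh_neg, Real.sinh_neg] at hX
  rw [show (0:ℝ) + b = b by ring] at hY
  rw [cosh_dist_mink, hX.1, hX.2.1, hX.2.2, hY.1, hY.2.1, hY.2.2]
  linear_combination (Real.cosh a*Real.cosh b)*(mink_self z₀) - (Real.sinh a*Real.cosh b)*ho1
    + (Real.cosh a*Real.sinh b)*ho2 - (Real.sinh a*Real.sinh b)*(hcosθ.symm)

lemma sinh_mul_le (μ : ℝ) (hμ0 : 0 ≤ μ) (hμ1 : μ ≤ 1) :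
    ∀ u : ℝ, 0 ≤ u → Real.sinh (μ*u) ≤ μ * Real.sinh u := by
  have hmono : MonotoneOn (fun v : ℝ => μ * Real.sinh v - Real.sinh (μ*v)) (Set.Ici 0) := by
    apply monotoneOn_of_deriv_nonneg (convex_Ici 0)
    · exact ((continuous_const.mul Real.continuous_sinh).sub
        (Real.continuous_sinh.comp (continuous_const.mul continuous_id))).continuousOn
    · intro x _
      exact (((Real.differentiable_sinh x).const_mul μ).sub
        ((Real.differentiable_sinh (μ*x)).comp x (differentiable_id.const_mul μ x))).differentiableWithinAt
    · intro x hx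
      rw [interior_Ici] at hx
      have hd : HasDerivAt (fun v : ℝ => μ * Real.sinh v - Real.sinh (μ*v))
          (μ * Real.cosh x - Real.cosh (μ*x) * μ) x := by
        have h1 : HasDerivAt (fun v : ℝ => μ * v) μ x := by
          simpa using (hasDerivAt_id x).const_mul μ
        exact ((Real.hasDerivAt_sinh x).const_mul μ).sub (h1.sinh)
      rw [hd.deriv]
      have : Real.cosh (μ*x) ≤ Real.cosh x := by
        rw [Real.cosh_le_cosh]
        have hx0 : (0:ℝ) ≤ x := hx.le
        rw [abs_of_nonneg (by positivity), abs_of_nonneg hx0]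
        nlinarith
      nlinarith
  intro u hu
  have := hmono (Set.self_mem_Ici) (Set.mem_Ici.2 hu) hu
  simp only [mul_zero, Real.sinh_zero, sub_zero] at this
  linarith [this]

lemma K_ge (θ : ℝ) (hθ : θ ∈ Ioo 0 Real.pi) :
    1/Real.sin (θ/2) ≤ (if θ < Real.pi / 2 then 1 / Real.sin θ + 1 / Real.tan θ + 1
      else 1 / Real.sin θ + 1) ∧ 0 < Real.sin (θ/2) ∧ Real.sin (θ/2) ≤ 1 := by
  obtain ⟨hθ0, hθπ⟩ := hθ
  have hpi := Real.pi_pos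
  have hs : 0 < Real.sin (θ/2) :=
    Real.sin_pos_of_pos_of_lt_pi (by linarith) (by linarith)
  have hs1 : Real.sin (θ/2) ≤ 1 := Real.sin_le_one _
  have hsinθ : Real.sin θ = 2 * Real.sin (θ/2) * Real.cos (θ/2) := by
    rw [show θ = 2*(θ/2) by ring, Real.sin_two_mul]; ring_nf
  have hcosθ : Real.cos θ = 2 * Real.cos (θ/2)^2 - 1 := by
    rw [show θ = 2*(θ/2) by ring, Real.cos_two_mul]; ring_nf
  have hsθpos : 0 < Real.sin θ := Real.sin_pos_of_pos_of_lt_pi hθ0 hθπ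
  have hpyth := Real.sin_sq_add_cos_sq (θ/2)
  refine ⟨?_, hs, hs1⟩
  by_cases hcase : θ < Real.pi / 2
  · rw [if_pos hcase]
    have hc : 0 < Real.cos (θ/2) :=
      Real.cos_pos_of_mem_Ioo ⟨by linarith, by linarith⟩
    have hcθ : 0 < Real.cos θ := Real.cos_pos_of_mem_Ioo ⟨by linarith, hcase⟩
    have hc1 : Real.cos (θ/2) ≤ 1 := Real.cos_le_one _
    have heq : 1 / Real.sin θ + 1 / Real.tan θ + 1 = Real.cos (θ/2)/Real.sin (θ/2) + 1 := by
      rw [Real.tan_eq_sin_div_cos, one_div_div, hsinθ, hcosθ]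
      field_simp
      ring
    rw [heq]
    have hcs1 : 1 ≤ Real.cos (θ/2) + Real.sin (θ/2) := by nlinarith
    have : Real.cos (θ/2)/Real.sin (θ/2) + 1 - 1/Real.sin (θ/2)
        = (Real.cos (θ/2) + Real.sin (θ/2) - 1)/Real.sin (θ/2) := by
      field_simp
    have h2 : 0 ≤ (Real.cos (θ/2) + Real.sin (θ/2) - 1)/Real.sin (θ/2) :=
      div_nonneg (by linarith) hs.le
    linarith
  · rw [if_neg hcase]
    push_neg at hcase
    have hsge : Real.sqrt 2 / 2 ≤ Real.sin (θ/2) := by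
      rw [← Real.sin_pi_div_four]
      apply Real.strictMonoOn_sin.monotoneOn ⟨by linarith, by linarith⟩
        ⟨by linarith, by linarith⟩ (by linarith)
    have h2 : Real.sqrt 2 ≥ 1 := by
      nlinarith [Real.sq_sqrt (by norm_num : (2:ℝ) ≥ 0), Real.sqrt_nonneg 2]
    have hshalf : 1/2 ≤ Real.sin (θ/2) := by nlinarith
    have h1s : 1/Real.sin (θ/2) ≤ 2 := by
      rw [div_le_iff₀ hs]; nlinarith
    have hsin1 : Real.sin θ ≤ 1 := Real.sin_le_one θ
    have : 1 ≤ 1/Real.sin θ := by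
      rw [le_div_iff₀ hsθpos]; nlinarith
    linarith

lemma quasi_bound (θ a b D : ℝ) (hθ : θ ∈ Ioo 0 Real.pi) (ha : 0 ≤ a) (hb : 0 ≤ b) (hD : 0 ≤ D)
    (hcosh : Real.cosh D = Real.cosh a * Real.cosh b - Real.cos θ * (Real.sinh a * Real.sinh b)) :
    a + b ≤ (if θ < Real.pi / 2 then 1 / Real.sin θ + 1 / Real.tan θ + 1
      else 1 / Real.sin θ + 1) * D := by
  obtain ⟨hK, hs, hs1⟩ := K_ge θ hθ
  set s := Real.sin (θ/2) with hsdef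
  obtain ⟨K, hKdef⟩ : ∃ K : ℝ, K = (if θ < Real.pi / 2 then 1 / Real.sin θ + 1 / Real.tan θ + 1
      else 1 / Real.sin θ + 1) := ⟨_, rfl⟩
  rw [← hKdef] at hK ⊢
  have hKpos : 0 < K := lt_of_lt_of_le (by positivity) hK
  -- s² = (1 - cos θ)/2
  have hpyth := Real.sin_sq_add_cos_sq (θ/2)
  have hcosθ : Real.cos θ = 2 * Real.cos (θ/2)^2 - 1 := by
    rw [show θ = 2*(θ/2) by ring, Real.cos_two_mul]; ring_nf
  have hs2 : s^2 = (1 - Real.cos θ)/2 := by rw [hcosθ, hsdef]; linarith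
  -- cosh D - 1 ≥ s²(cosh(a+b) - 1)
  have e1 : Real.cosh (a+b) = Real.cosh a * Real.cosh b + Real.sinh a * Real.sinh b :=
    Real.cosh_add a b
  have e2 : Real.cosh (a-b) = Real.cosh a * Real.cosh b - Real.sinh a * Real.sinh b :=
    Real.cosh_sub a b
  have hcge : -1 ≤ Real.cos θ := Real.neg_one_le_cos θ
  have hab1 : 1 ≤ Real.cosh (a-b) := Real.one_le_cosh _
  have e1c : Real.cos θ * Real.cosh (a+b)
      = Real.cos θ * (Real.cosh a * Real.cosh b + Real.sinh a * Real.sinh b) := by rw [e1]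
  have e2c : Real.cos θ * Real.cosh (a-b)
      = Real.cos θ * (Real.cosh a * Real.cosh b - Real.sinh a * Real.sinh b) := by rw [e2]
  have hmain' : ((1 - Real.cos θ)/2) * (Real.cosh (a+b) - 1) ≤ Real.cosh D - 1 := by
    nlinarith [mul_nonneg (by linarith : (0:ℝ) ≤ 1 + Real.cos θ)
      (by linarith : (0:ℝ) ≤ Real.cosh (a-b) - 1), e1c, e2c]
  have hmain : s^2 * (Real.cosh (a+b) - 1) ≤ Real.cosh D - 1 := by
    rw [hs2]; exact hmain'
  -- convert to sinh half
  have idD : Real.cosh D = 1 + 2 * Real.sinh (D/2)^2 := by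
    have h1 := Real.cosh_two_mul (D/2)
    have h2 := Real.cosh_sq (D/2)
    rw [show 2*(D/2) = D by ring] at h1
    linarith
  have idAB : Real.cosh (a+b) = 1 + 2 * Real.sinh ((a+b)/2)^2 := by
    have h1 := Real.cosh_two_mul ((a+b)/2)
    have h2 := Real.cosh_sq ((a+b)/2)
    rw [show 2*((a+b)/2) = a+b by ring] at h1
    linarith
  set u := (a+b)/2 with hu
  have hu0 : 0 ≤ u := by rw [hu]; linarith
  have hsinhu : 0 ≤ Real.sinh u := by rw [← Real.sinh_zero]; exact Real.sinh_le_sinh.2 hu0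
  have hsinhD : 0 ≤ Real.sinh (D/2) := by
    rw [← Real.sinh_zero]; exact Real.sinh_le_sinh.2 (by linarith)
  have hsq : (s * Real.sinh u)^2 ≤ Real.sinh (D/2)^2 := by nlinarith
  have h2 : s * Real.sinh u ≤ Real.sinh (D/2) := by
    have := Real.sqrt_le_sqrt hsq
    rwa [Real.sqrt_sq (by positivity), Real.sqrt_sq hsinhD] at this
  have hμ1 : 1/K ≤ s := (one_div_le hKpos hs).2 hK
  have hμ0 : 0 ≤ 1/K := by positivity
  have h3 : Real.sinh ((1/K)*u) ≤ (1/K) * Real.sinh u :=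
    sinh_mul_le (1/K) hμ0 (by linarith) u hu0
  have h4 : (1/K) * Real.sinh u ≤ s * Real.sinh u :=
    mul_le_mul_of_nonneg_right hμ1 hsinhu
  have h5 : Real.sinh ((1/K)*u) ≤ Real.sinh (D/2) := by linarith
  have h6 : (1/K)*u ≤ D/2 := Real.sinh_le_sinh.1 h5
  have : u ≤ K * (D/2) := by
    rw [div_mul_eq_mul_div, one_mul, div_le_iff₀ hKpos] at h6
    linarith [h6]
  rw [hu] at this
  linarith

end QGAux

/-- The concatenation of two sides `[P,Q]`, `[Q,R]` of a
geodesic triangle in `ℍ` meeting at interior angle `θ ∈ (0,π)` is a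
`K(θ)`-quasi-geodesic, with `K(θ) = 1/sin θ + 1/tan θ + 1` for
`θ ∈ (0,π/2)` and `K(θ) = 1/sin θ + 1` for `θ ∈ [π/2,π)`. -/
theorem two_sides_quasigeodesic (P Q R : ℍ) (c₁ c₂ : ℝ → ℍ)
    (h₁ : Isometry c₁) (h₂ : Isometry c₂)
    (hP : c₁ 0 = P) (hQ : c₁ (dist P Q) = Q)
    (hQ' : c₂ 0 = Q) (hR : c₂ (dist Q R) = R)
    (θ : ℝ) (hθ : θ ∈ Ioo 0 Real.pi)
    (hangle : |vecAngle (-(dir c₁ (dist P Q))) (dir c₂ 0)| = θ)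
    (γ : ℝ → ℍ)
    (hγ₁ : ∀ s ∈ Icc 0 (dist P Q), γ s = c₁ s)
    (hγ₂ : ∀ s ∈ Icc (dist P Q) (dist P Q + dist Q R), γ s = c₂ (s - dist P Q)) :
    ∀ s t : ℝ, 0 ≤ s → s ≤ t → t ≤ dist P Q + dist Q R →
      pathLength γ s t ≤ ENNReal.ofReal
        ((if θ < Real.pi / 2 then 1 / Real.sin θ + 1 / Real.tan θ + 1
          else 1 / Real.sin θ + 1) * dist (γ s) (γ t)) := by
  intro s t hs hst ht
  obtain ⟨hK, hshalf, hs1⟩ := QGAux.K_ge θ hθ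
  obtain ⟨K, hKdef⟩ : ∃ K : ℝ, K = (if θ < Real.pi / 2 then 1 / Real.sin θ + 1 / Real.tan θ + 1
      else 1 / Real.sin θ + 1) := ⟨_, rfl⟩
  rw [← hKdef] at hK ⊢
  have hK1 : 1 ≤ K := by
    refine le_trans ?_ hK
    rw [le_div_iff₀ hshalf]
    linarith
  set d1 := dist P Q with hd1
  set d2 := dist Q R with hd2
  have hd1n : 0 ≤ d1 := dist_nonneg
  have hd2n : 0 ≤ d2 := dist_nonneg
  have hQQ : c₁ d1 = c₂ 0 := by rw [hQ, hQ']
  -- γ is 1-Lipschitz on [0, d1+d2]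
  have hdist_le : ∀ u ∈ Icc (0:ℝ) (d1+d2), ∀ v ∈ Icc (0:ℝ) (d1+d2), u ≤ v →
      dist (γ u) (γ v) ≤ v - u := by
    intro u hu v hv huv
    by_cases hcv : v ≤ d1
    · rw [hγ₁ u ⟨hu.1, huv.trans hcv⟩, hγ₁ v ⟨hu.1.trans huv, hcv⟩, h₁.dist_eq, Real.dist_eq,
        abs_of_nonpos (by linarith)]
      linarith
    · push_neg at hcv
      by_cases hcu : d1 ≤ u
      · rw [hγ₂ u ⟨hcu, hu.2⟩, hγ₂ v ⟨hcv.le, hv.2⟩, h₂.dist_eq, Real.dist_eq,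
          abs_of_nonpos (by linarith)]
        linarith
      · push_neg at hcu
        have hmid : γ d1 = c₁ d1 := hγ₁ d1 ⟨hd1n, le_refl d1⟩
        have l1 : dist (γ u) (γ d1) ≤ d1 - u := by
          rw [hγ₁ u ⟨hu.1, hcu.le⟩, hmid, h₁.dist_eq, Real.dist_eq,
            abs_of_nonpos (by linarith)]
          linarith
        have l2 : dist (γ d1) (γ v) ≤ v - d1 := by
          rw [hγ₂ d1 ⟨le_refl d1, by linarith⟩, hγ₂ v ⟨hcv.le, hv.2⟩, h₂.dist_eq, Real.dist_eq,
            abs_of_nonpos (by linarith)]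
          linarith
        calc dist (γ u) (γ v) ≤ dist (γ u) (γ d1) + dist (γ d1) (γ v) := dist_triangle _ _ _
          _ ≤ v - u := by linarith
  have hLip : LipschitzOnWith 1 γ (Icc 0 (d1+d2)) := by
    apply LipschitzOnWith.of_dist_le_mul
    intro x hx y hy
    rcases le_total x y with h | h
    · rw [Real.dist_eq, abs_of_nonpos (by linarith), NNReal.coe_one, one_mul]
      calc dist (γ x) (γ y) ≤ y - x := hdist_le x hx y hy h
        _ = -(x - y) := by ring
    · rw [dist_comm (γ x), Real.dist_eq, abs_of_nonneg (by linarith), NNReal.coe_one, one_mul]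
      exact (hdist_le y hy x hx h).trans (by linarith)
  -- path length bound
  have hplen : pathLength γ s t ≤ ENNReal.ofReal (t - s) := by
    rw [pathLength]
    have hmaps : MapsTo id (Icc s t) (Icc 0 (d1+d2)) := by
      intro x hx
      exact ⟨hs.trans hx.1, hx.2.trans ht⟩
    have hcomp := hLip.comp_eVariationOn_le hmaps
    have hγid : γ ∘ id = γ := rfl
    rw [hγid] at hcomp
    refine hcomp.trans ?_
    have hidvar : eVariationOn id (Icc s t) ≤ ENNReal.ofReal (t - s) := by
      have hmono : MonotoneOn (id : ℝ → ℝ) (Icc s t) := fun x _ y _ h => h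
      have := hmono.eVariationOn_le (a := s) (b := t) ⟨le_refl s, hst⟩ ⟨hst, le_refl t⟩
      rwa [inter_self] at this
    simpa only [ENNReal.coe_one, one_mul] using hidvar
  refine hplen.trans (ENNReal.ofReal_le_ofReal ?_)
  -- now the distance lower bound
  by_cases hcA : t ≤ d1
  · rw [hγ₁ s ⟨hs, hst.trans hcA⟩, hγ₁ t ⟨hs.trans hst, hcA⟩, h₁.dist_eq, Real.dist_eq,
      abs_of_nonpos (by linarith)]
    nlinarith
  · push_neg at hcA
    by_cases hcB : d1 ≤ s
    · rw [hγ₂ s ⟨hcB, hst.trans ht⟩, hγ₂ t ⟨hcA.le, ht⟩, h₂.dist_eq, Real.dist_eq,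
        abs_of_nonpos (by linarith)]
      nlinarith
    · push_neg at hcB
      set a := d1 - s with ha
      set b := t - d1 with hb
      have hγs : γ s = c₁ (d1 - a) := by
        rw [hγ₁ s ⟨hs, hcB.le⟩]; congr 1; rw [ha]; ring
      have hγt : γ t = c₂ b := by
        rw [hγ₂ t ⟨hcA.le, ht⟩]
      have hlc := QGAux.law_of_cosines c₁ c₂ h₁ h₂ d1 hQQ θ hangle a b
      have hqb := QGAux.quasi_bound θ a b (dist (c₁ (d1 - a)) (c₂ b)) hθ
        (by rw [ha]; linarith) (by rw [hb]; linarith) dist_nonneg hlc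
      rw [← hKdef] at hqb
      rw [hγs, hγt]
      have : t - s = a + b := by rw [ha, hb]; ring
      linarith


end
end

section
/- Let α, β be hyperbolic elements of a discrete torsion-free group G ≤ PSL₂(ℝ) with intersecting axes, τ_α ≤ L, τ_β ≤ L, and let K, C be the associated constants. Let m be a positive integer with m·τ_α > 6KC, and let I⁰ be the segment of γ(αᵐ, β) lying on (a translate of) A_α of length m·τ_α. Then the open neighbourhood U ⊂ N_C(I⁰), bounded by the geodesics perpendicular to I⁰ at distance 3KC from its endpoints, contains a subsegment J of I⁰ of length at least m·τ_α − 6KC, and the closure of U is disjoint from N_C(Iᵏ) for every other geodesic piece Iᵏ of γ(αᵐ, β). -/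
/- Setup: the hyperbolic plane ℍ (upper half-plane model with its hyperbolic
metric), orientation-preserving isometries identified with elements of
SL(2,ℝ) acting by Möbius transformations (so that PSL(2,ℝ) = SL(2,ℝ)/{±1} is
the isometry group), the ideal boundary ℝ ∪ {∞}, geodesics, axes,
translation lengths, quasi-geodesics, Fuchsian groups and the Goldman
bracket machinery. -/

noncomputable section
open Set UpperHalfPlane ENNReal Metric

lemma smul_coe_eq (g : SL2) (z : ℍ) :
    ((g • z : ℍ) : ℂ) = ((g.1 0 0 : ℝ) * z + (g.1 0 1 : ℝ)) / ((g.1 1 0 : ℝ) * z + (g.1 1 1 : ℝ)) := by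
  rw [UpperHalfPlane.specialLinearGroup_apply]
  simp [UpperHalfPlane.coe_mk]

lemma arsinh_eq_log (c : ℝ) (hc : 0 < c) :
    2 * Real.arsinh ((c - 1) / (2 * Real.sqrt c)) = Real.log c := by
  have hs : (0:ℝ) < Real.sqrt c := Real.sqrt_pos.2 hc
  have h2 : Real.sqrt c * Real.sqrt c = c := Real.mul_self_sqrt hc.le
  have h3 : (c - 1) / (2 * Real.sqrt c) = Real.sinh (Real.log (Real.sqrt c)) := by
    rw [Real.sinh_log hs]
    rw [div_eq_div_iff (by positivity) (by norm_num), inv_eq_one_div]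
    field_simp
    nlinarith [h2]
  rw [h3, Real.arsinh_sinh, Real.log_sqrt hc.le]
  ring


lemma dist_of_scale (c : ℝ) (hc : 1 ≤ c) (z w : ℍ) (hw : (w : ℂ) = (c : ℝ) * z) :
    Real.log c ≤ dist z w := by
  have hc0 : (0:ℝ) < c := lt_of_lt_of_le one_pos hc
  have him : w.im = c * z.im := by
    have := congrArg Complex.im hw
    simpa [UpperHalfPlane.coe_im] using this
  have habs : dist (z : ℂ) (w : ℂ) = (c - 1) * ‖(z : ℂ)‖ := by
    rw [Complex.dist_eq, hw]
    have h' : (z:ℂ) - (c:ℝ)*z = ((1-c : ℝ):ℂ) * z := by push_cast; ring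
    rw [h', norm_mul, Complex.norm_real, Real.norm_eq_abs, abs_of_nonpos (by linarith)]
    ring
  rw [UpperHalfPlane.dist_eq, ← arsinh_eq_log c hc0]
  have hzim : (0:ℝ) < z.im := z.im_pos
  gcongr 2 * Real.arsinh ?_
  rw [habs, him]
  have hsq : Real.sqrt (z.im * (c * z.im)) = Real.sqrt c * z.im := by
    rw [show z.im * (c * z.im) = c * (z.im * z.im) by ring, Real.sqrt_mul hc0.le,
      Real.sqrt_mul_self hzim.le]
  rw [hsq]
  have hzabs : z.im ≤ ‖(z : ℂ)‖ :=
    le_trans (le_abs_self _) (Complex.abs_im_le_norm (z : ℂ))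
  have h1 : (0:ℝ) ≤ c - 1 := sub_nonneg.2 hc
  rw [div_le_div_iff₀ (by positivity) (by positivity)]
  nlinarith [mul_le_mul_of_nonneg_left hzabs (mul_nonneg h1 (Real.sqrt_nonneg c))]


lemma dist_I_scale (c : ℝ) (hc : 1 ≤ c) (w : ℍ) (hw : (w : ℂ) = (c : ℝ) * Complex.I) :
    dist UpperHalfPlane.I w = Real.log c := by
  have hc0 : (0:ℝ) < c := lt_of_lt_of_le one_pos hc
  have him : w.im = c := by
    have := congrArg Complex.im hw
    simpa [UpperHalfPlane.coe_im] using this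
  rw [UpperHalfPlane.dist_eq, ← arsinh_eq_log c hc0]
  congr 1
  congr 1
  rw [Complex.dist_eq, UpperHalfPlane.coe_I, hw, him]
  have h' : Complex.I - (c:ℝ) * Complex.I = ((1-c : ℝ):ℂ) * Complex.I := by push_cast; ring
  rw [h', norm_mul, Complex.norm_real, Real.norm_eq_abs, abs_of_nonpos (by linarith), Complex.norm_I]
  simp [UpperHalfPlane.I_im]



lemma step1 (α : SL2) (hα : IsHyperbolicIsom α) :
    ∃ (N : Matrix (Fin 2) (Fin 2) ℝ) (l : ℝ), N.det = 1 ∧ l ≠ 0 ∧ l^2 ≠ 1 ∧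
      N * α.1 = !![l, 0; 0, l⁻¹] * N := by
  obtain ⟨hnt, hfix, x, y, hxy, hS⟩ := hα
  set a := α.1 0 0 with ha_def
  set b := α.1 0 1 with hb_def
  set c := α.1 1 0 with hc_def
  set d := α.1 1 1 with hd_def
  have hdet : a * d - b * c = 1 := by
    have := α.2
    rwa [Matrix.det_fin_two] at this
  have heta : α.1 = !![a, b; c, d] := by
    rw [ha_def, hb_def, hc_def, hd_def]
    exact Matrix.eta_fin_two α.1
  by_cases hc : c = 0
  · -- upper triangular case
    have had' : a * d = 1 := by rw [hc] at hdet; linarith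
    have ha0 : a ≠ 0 := left_ne_zero_of_mul_eq_one had'
    have hd0 : d ≠ 0 := right_ne_zero_of_mul_eq_one had'
    have hdinv : d = a⁻¹ := by field_simp; linarith [had']
    by_cases had : a = d
    · exfalso
      by_cases hb : b = 0
      · -- α acts trivially on the boundary : fixed set is univ
        have hall : ∀ p : Bd, mobius α p = p := by
          intro p
          cases p with
          | none => simp [mobius, ← hc_def, hc]
          | some r =>
            simp only [mobius, ← hc_def, ← hd_def, ← ha_def, ← hb_def, hc, hb, zero_mul, zero_add,
              if_neg hd0, add_zero]
            rw [had, mul_comm, mul_div_cancel_right₀ r hd0]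
        have huniv : (Set.univ : Set Bd) = {x, y} := by
          rw [← hS]; ext p; simp [hall p]
        have h0 : (some (0:ℝ)) ∈ ({x, y} : Set Bd) := huniv ▸ trivial
        have h1 : (some (1:ℝ)) ∈ ({x, y} : Set Bd) := huniv ▸ trivial
        have h2 : (some (2:ℝ)) ∈ ({x, y} : Set Bd) := huniv ▸ trivial
        simp only [Set.mem_insert_iff, Set.mem_singleton_iff] at h0 h1 h2
        rcases h0 with h0 | h0 <;> rcases h1 with h1 | h1 <;> rcases h2 with h2 | h2 <;>
          first
          | exact (by norm_num : ¬ ((some (0:ℝ) : Bd) = some 1)) (h0.trans h1.symm)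
          | exact (by norm_num : ¬ ((some (0:ℝ) : Bd) = some 2)) (h0.trans h2.symm)
          | exact (by norm_num : ¬ ((some (1:ℝ) : Bd) = some 2)) (h1.trans h2.symm)
      · -- fixed set is {none}
        have hsing : {p : Bd | mobius α p = p} = {none} := by
          ext p
          cases p with
          | none => simp [mobius, ← hc_def, hc]
          | some r =>
            simp only [Set.mem_setOf_eq, Set.mem_singleton_iff, mobius, ← hc_def, ← hd_def,
              ← ha_def, ← hb_def, hc, zero_mul, zero_add, if_neg hd0]
            constructor
            · intro h
              exfalso
              have := Option.some_injective _ h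
              rw [div_eq_iff hd0] at this
              apply hb
              rw [had] at this
              nlinarith [this]
            · intro h; exact absurd h (by simp)
        rw [hS] at hsing
        have hx : x ∈ ({x, y} : Set Bd) := by simp
        have hy : y ∈ ({x, y} : Set Bd) := by simp
        rw [hsing] at hx hy
        simp only [Set.mem_singleton_iff] at hx hy
        exact hxy (hx.trans hy.symm)
    · -- a ≠ d : diagonalizable
      refine ⟨!![1, -(b/(d-a)); 0, 1], a, ?_, ha0, ?_, ?_⟩
      · simp [Matrix.det_fin_two_of]
      · intro h
        have h' : a * a = 1 := by nlinarith [h]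
        exact had ((eq_inv_of_mul_eq_one_left h').trans hdinv.symm)
      · rw [heta, hc]
        have hda : d - a ≠ 0 := sub_ne_zero.2 (Ne.symm had)
        rw [show (!![1, -(b/(d-a)); 0, 1] : Matrix (Fin 2) (Fin 2) ℝ) * !![a, b; 0, d]
            = !![a, b - (b/(d-a))*d; 0, d] by rw [Matrix.mul_fin_two]; ring_nf]
        rw [show (!![a, 0; 0, a⁻¹] : Matrix (Fin 2) (Fin 2) ℝ) * !![1, -(b/(d-a)); 0, 1]
            = !![a, -(a*(b/(d-a))); 0, a⁻¹] by rw [Matrix.mul_fin_two]; ring_nf]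
        rw [← hdinv]
        congr 1
        field_simp
        ring
  · -- c ≠ 0 : two finite fixed points
    have hnone : mobius α none = some (a / c) := by simp [mobius, ← hc_def, ← ha_def, hc]
    have hxS : mobius α x = x := by
      have : x ∈ {p : Bd | mobius α p = p} := by rw [hS]; simp
      exact this
    have hyS : mobius α y = y := by
      have : y ∈ {p : Bd | mobius α p = p} := by rw [hS]; simp
      exact this
    obtain ⟨r₁, rfl⟩ : ∃ r, x = some r := by
      cases x with
      | none => rw [hnone] at hxS; exact absurd hxS (by simp)
      | some r => exact ⟨r, rfl⟩
    obtain ⟨r₂, rfl⟩ : ∃ r, y = some r := by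
      cases y with
      | none => rw [hnone] at hyS; exact absurd hyS (by simp)
      | some r => exact ⟨r, rfl⟩
    have hr : r₁ ≠ r₂ := fun h => hxy (by rw [h])
    -- extract the fixed point equations
    have extract : ∀ r : ℝ, mobius α (some r) = some r →
        c * r + d ≠ 0 ∧ a * r + b = r * (c * r + d) := by
      intro r h
      simp only [mobius, ← hc_def, ← hd_def, ← ha_def, ← hb_def] at h
      by_cases hden : c * r + d = 0
      · rw [if_pos hden] at h; exact absurd h (by simp)
      · rw [if_neg hden] at h
        have := Option.some_injective _ h
        rw [div_eq_iff hden] at this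
        exact ⟨hden, this⟩
    obtain ⟨hden1, e1⟩ := extract r₁ hxS
    obtain ⟨hden2, e2⟩ := extract r₂ hyS
    have hsum : c * (r₁ + r₂) = a - d := by
      have h0 : (r₁ - r₂) * (c * (r₁ + r₂) - (a - d)) = 0 := by linear_combination e2 - e1
      have := (mul_eq_zero.mp h0).resolve_left (sub_ne_zero.2 hr)
      linarith
    have hprod : c * (r₁ * r₂) = -b := by
      have h1 : c * (c * (r₁ * r₂) + b) = 0 := by
        linear_combination c * e1 + (c * r₁) * hsum
      have := (mul_eq_zero.mp h1).resolve_left hc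
      linarith
    have hmul : (c * r₁ + d) * (c * r₂ + d) = 1 := by
      linear_combination c * hprod + d * hsum + hdet
    have hinv : c * r₂ + d = (c * r₁ + d)⁻¹ :=
      eq_inv_of_mul_eq_one_left (by linear_combination hmul)
    have hne : c * r₁ + d ≠ c * r₂ + d := by
      intro h
      exact hr (by
        have : c * r₁ = c * r₂ := by linarith
        exact mul_left_cancel₀ hc this)
    have hδ : r₁ - r₂ ≠ 0 := sub_ne_zero.2 hr
    refine ⟨!![1, -r₂; -(r₁ - r₂)⁻¹, r₁ * (r₁ - r₂)⁻¹], c * r₁ + d, ?_, hden1, ?_, ?_⟩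
    · rw [Matrix.det_fin_two_of]
      field_simp
    · intro h
      have h' : (c * r₁ + d) * (c * r₁ + d) = 1 := by nlinarith [h]
      apply hne
      rw [hinv]
      exact eq_inv_of_mul_eq_one_left h'
    · rw [heta, ← hinv]
      rw [show (!![1, -r₂; -(r₁-r₂)⁻¹, r₁ * (r₁-r₂)⁻¹] : Matrix (Fin 2) (Fin 2) ℝ) * !![a, b; c, d]
          = !![a - r₂ * c, b - r₂ * d;
              -(r₁-r₂)⁻¹ * a + r₁ * (r₁-r₂)⁻¹ * c, -(r₁-r₂)⁻¹ * b + r₁ * (r₁-r₂)⁻¹ * d] by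
        rw [Matrix.mul_fin_two]; ring_nf]
      rw [show (!![c * r₁ + d, 0; 0, c * r₂ + d] : Matrix (Fin 2) (Fin 2) ℝ)
          * !![1, -r₂; -(r₁-r₂)⁻¹, r₁ * (r₁-r₂)⁻¹]
          = !![c * r₁ + d, -((c * r₁ + d) * r₂);
              -((c * r₂ + d) * (r₁-r₂)⁻¹), (c * r₂ + d) * (r₁ * (r₁-r₂)⁻¹)] by
        rw [Matrix.mul_fin_two]; ring_nf]
      ext i j
      fin_cases i <;> fin_cases j <;>
        simp [Matrix.cons_val_zero, Matrix.cons_val_one, Matrix.head_cons]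
      · linarith [hsum]
      · linear_combination hprod
      · linear_combination ((r₁ - r₂)⁻¹) * hsum
      · linear_combination (-(r₁ - r₂)⁻¹) * hprod


lemma step2 (α : SL2) (hα : IsHyperbolicIsom α) :
    ∃ (N : Matrix (Fin 2) (Fin 2) ℝ) (l : ℝ), N.det = 1 ∧ 1 < l^2 ∧
      N * α.1 = !![l, 0; 0, l⁻¹] * N := by
  obtain ⟨N, l, hdet, hl0, hl1, hN⟩ := step1 α hα
  rcases lt_or_gt_of_ne hl1 with h | h
  · refine ⟨!![0, 1; -1, 0] * N, l⁻¹, ?_, ?_, ?_⟩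
    · rw [Matrix.det_mul, hdet, Matrix.det_fin_two_of]; norm_num
    · rw [inv_pow]
      have hp : (0:ℝ) < l ^ 2 := by positivity
      exact (one_lt_inv₀ hp).mpr h
    · rw [inv_inv, Matrix.mul_assoc, hN, ← Matrix.mul_assoc, ← Matrix.mul_assoc]
      congr 1
      rw [Matrix.mul_fin_two, Matrix.mul_fin_two]
      ring_nf
  · exact ⟨N, l, hdet, h, hN⟩


lemma hyp_conj (α : SL2) (hα : IsHyperbolicIsom α) :
    ∃ (g : SL2) (c : ℝ), 1 < c ∧
      ∀ z : ℍ, (((g * α * g⁻¹) • z : ℍ) : ℂ) = (c : ℝ) * (z : ℂ) := by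
  obtain ⟨N, l, hdetN, hl2, hN⟩ := step2 α hα
  have hl0 : l ≠ 0 := by
    intro h; rw [h] at hl2; norm_num at hl2
  have hdetD : (!![l, 0; 0, l⁻¹] : Matrix (Fin 2) (Fin 2) ℝ).det = 1 := by
    rw [Matrix.det_fin_two_of]; field_simp; norm_num
  set g : SL2 := ⟨N, hdetN⟩ with hg
  set D : SL2 := ⟨!![l, 0; 0, l⁻¹], hdetD⟩ with hD
  have hconj : g * α * g⁻¹ = D := by
    rw [mul_inv_eq_iff_eq_mul]
    apply Subtype.ext
    exact hN
  refine ⟨g, l^2, hl2, fun z => ?_⟩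
  rw [hconj]
  rw [smul_coe_eq]
  have h00 : D.1 0 0 = l := by rw [hD]; simp
  have h01 : D.1 0 1 = 0 := by rw [hD]; simp
  have h10 : D.1 1 0 = 0 := by rw [hD]; simp
  have h11 : D.1 1 1 = l⁻¹ := by rw [hD]; simp
  rw [h00, h01, h10, h11]
  have : ((l : ℝ) : ℂ) ≠ 0 := by exact_mod_cast hl0
  push_cast
  field_simp
  ring


lemma pow_smul_coe (X : SL2) (c : ℝ) (h : ∀ z : ℍ, ((X • z : ℍ) : ℂ) = (c : ℝ) * z) :
    ∀ (k : ℕ) (z : ℍ), (((X ^ k) • z : ℍ) : ℂ) = (c ^ k : ℝ) * z := by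
  intro k
  induction k with
  | zero => intro z; simp
  | succ n ih =>
    intro z
    rw [pow_succ', mul_smul, h _, ih z]
    push_cast
    ring


lemma key_bound (α : SL2) (hα : IsHyperbolicIsom α) (m : ℕ) (z : ℍ) :
    (m : ℝ) * transLength α ≤ dist z ((α ^ m) • z) := by
  obtain ⟨g, c, hc, hact⟩ := hyp_conj α hα
  set X := g * α * g⁻¹ with hX
  have hXk : ∀ k : ℕ, X ^ k = g * α ^ k * g⁻¹ := by
    intro k
    rw [hX]
    induction k with
    | zero => simp
    | succ n ih => rw [pow_succ, ih, pow_succ]; group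
  -- transLength α ≤ log c
  have hτ : transLength α ≤ Real.log c := by
    have hb : BddBelow (Set.range fun z : ℍ => dist z (α • z)) := by
      refine ⟨0, ?_⟩
      rintro _ ⟨w, rfl⟩
      exact dist_nonneg
    have h1 : transLength α ≤ dist (g⁻¹ • UpperHalfPlane.I) (α • (g⁻¹ • UpperHalfPlane.I)) :=
      ciInf_le hb _
    have h2 : dist (g⁻¹ • UpperHalfPlane.I) (α • g⁻¹ • UpperHalfPlane.I)
        = dist UpperHalfPlane.I (X • UpperHalfPlane.I) := by
      rw [← dist_smul g, smul_inv_smul]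
      congr 1
      rw [hX]
      rw [mul_smul, mul_smul]
    have h3 : dist UpperHalfPlane.I (X • UpperHalfPlane.I) = Real.log c := by
      apply dist_I_scale c hc.le
      rw [hact UpperHalfPlane.I, UpperHalfPlane.coe_I]
    rw [← h3, ← h2]
    exact h1
  -- pointwise lower bound for the power
  have hlow : Real.log (c ^ m) ≤ dist z ((α ^ m) • z) := by
    have h2 : dist z ((α ^ m) • z) = dist (g • z) ((X ^ m) • (g • z)) := by
      rw [← dist_smul g z ((α ^ m) • z)]
      congr 1
      rw [hXk m, mul_smul, mul_smul, inv_smul_smul]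
    rw [h2]
    apply dist_of_scale (c ^ m) (one_le_pow₀ hc.le)
    rw [pow_smul_coe X c hact m (g • z)]
  calc (m : ℝ) * transLength α ≤ (m : ℝ) * Real.log c := by
        apply mul_le_mul_of_nonneg_left hτ (Nat.cast_nonneg m)
    _ = Real.log (c ^ m) := by rw [Real.log_pow]
    _ ≤ dist z ((α ^ m) • z) := hlow


set_option maxHeartbeats 1000000 in
/-- If `m·τ_α > 6KC` then the `α`-segment `I⁰` of the
quasi-geodesic `γ(αᵐ,β)` ( = `γ '' [0,1/2]`) contains a subsegment `J` of
length at least `m·τ_α − 6KC` together with an open neighbourhood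
`U ⊆ N_C(I⁰)` of `J` whose closure avoids the `C`-neighbourhoods of all the
other geodesic pieces of `γ(αᵐ,β)`. -/
theorem separating_neighbourhood :
    ∀ L > (0 : ℝ), ∀ K ≥ (1 : ℝ), ∀ C > (0 : ℝ), ∀ G : Subgroup SL2,
      ProperlyDiscontinuous G → TorsionFree G →
      ∀ α β : G, IsHyperbolicIsom (α : SL2) → IsHyperbolicIsom (β : SL2) →
        transLength (α : SL2) ≤ L → transLength (β : SL2) ≤ L →
        ∀ m : ℕ, (m : ℝ) * transLength (α : SL2) > 6 * K * C →
          ∀ γ : ℝ → ℍ, IsZigzag ((α : SL2) ^ m) (β : SL2) γ →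
            IsQuasiGeodesic K γ →
            ∃ U : Set ℍ, IsOpen U ∧
              (∃ a b : ℝ, 0 ≤ a ∧ a ≤ b ∧ b ≤ 1 / 2 ∧
                (m : ℝ) * transLength (α : SL2) - 6 * K * C ≤ dist (γ a) (γ b) ∧
                γ '' Icc a b ⊆ U) ∧
              U ⊆ {x : ℍ | infDist x (γ '' Icc 0 (1 / 2)) < C} ∧
              (∀ k : ℤ, k ≠ 0 →
                closure U ∩ {x : ℍ | infDist x (γ '' Icc (k : ℝ) ((k : ℝ) + 1 / 2)) < C} = ∅) ∧
              (∀ k : ℤ,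
                closure U ∩ {x : ℍ | infDist x (γ '' Icc ((k : ℝ) + 1 / 2) ((k : ℝ) + 1)) < C} = ∅) := by
  intro L hL K hK C hC G hPD hTF α β hαh hβh hτα hτβ m hm γ hzig hqg
  obtain ⟨hcont, h0mem, hhalf, hper, hseg1, hseg2⟩ := hzig
  have hK0 : (0:ℝ) < K := lt_of_lt_of_le one_pos hK
  have hKC : (0:ℝ) < K * C := mul_pos hK0 hC
  have h6KC : (0:ℝ) < 6 * K * C := by nlinarith
  -- the segment I⁰ has length at least m·τ_α
  have hD0 : (m : ℝ) * transLength (α : SL2) ≤ dist (γ 0) (γ (1/2)) := by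
    rw [hhalf]
    exact key_bound (α : SL2) hαh m (γ 0)
  set D := dist (γ 0) (γ (1/2)) with hDdef
  have hD : 6 * K * C < D := lt_of_lt_of_le hm hD0
  have hDpos : (0:ℝ) < D := lt_trans h6KC hD
  -- constant-speed parametrisation of I⁰
  obtain ⟨cc, u, v, hciso, hcval⟩ := hseg1
  have hdist2 : ∀ s ∈ Icc (0:ℝ) (1/2), ∀ t ∈ Icc (0:ℝ) (1/2),
      dist (γ s) (γ t) = |v| * |s - t| := by
    intro s hs t ht
    rw [hcval s hs, hcval t ht, hciso.dist_eq, Real.dist_eq]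
    rw [show u + v * s - (u + v * t) = v * (s - t) by ring, abs_mul]
  have hV : |v| = 2 * D := by
    have := hdist2 0 (by norm_num) (1/2) (by norm_num)
    rw [← hDdef] at this
    rw [show |(0:ℝ) - 1/2| = 1/2 by norm_num] at this
    linarith
  -- choice of the subsegment J
  set a : ℝ := 3 * K * C / (2 * D) with ha_def
  set b : ℝ := 1/2 - a with hb_def
  have ha_pos : 0 < a := by
    apply div_pos (by nlinarith) (by linarith)
  have ha_lt : a < 1/4 := by
    rw [ha_def, div_lt_iff₀ (by linarith)]
    nlinarith
  have hab : a ≤ b := by rw [hb_def]; linarith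
  have hb_le : b ≤ 1/2 := by rw [hb_def]; linarith
  have hDne : D ≠ 0 := ne_of_gt hDpos
  have ha2D : 2 * D * a = 3 * K * C := by
    rw [ha_def]
    field_simp
  -- the quasi-geodesic sandwich inequality
  have hsand : ∀ s t p q : ℝ, s ≤ t → p ∈ Icc s t → q ∈ Icc s t →
      dist (γ p) (γ q) ≤ K * dist (γ s) (γ t) := by
    intro s t p q hst hp hq
    have h1 : edist (γ p) (γ q) ≤ pathLength γ s t := eVariationOn.edist_le γ hp hq
    have h2 := le_trans h1 (hqg s t hst)
    rw [edist_dist] at h2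
    exact (ENNReal.ofReal_le_ofReal_iff
      (mul_nonneg (by linarith) dist_nonneg)).mp h2
  -- separation of the middle subsegment from the far pieces of γ
  have hsep : ∀ s ∈ Icc a b, ∀ t : ℝ, (1/2 ≤ t ∨ t ≤ 0) → 3 * C ≤ dist (γ s) (γ t) := by
    intro s hs t ht
    have hs0 : (0:ℝ) ≤ s := le_trans ha_pos.le hs.1
    have hs12 : s ≤ 1/2 := le_trans hs.2 hb_le
    rcases ht with ht | ht
    · -- t is to the right of I⁰
      have hst : s ≤ t := le_trans hs12 ht
      have hkey : dist (γ s) (γ (1/2)) ≤ K * dist (γ s) (γ t) :=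
        hsand s t s (1/2) hst ⟨le_refl s, hst⟩ ⟨hs12, ht⟩
      have hlow : 3 * K * C ≤ dist (γ s) (γ (1/2)) := by
        rw [hdist2 s ⟨hs0, hs12⟩ (1/2) (by norm_num)]
        rw [hV, abs_of_nonpos (by linarith)]
        have : s ≤ b := hs.2
        rw [hb_def] at this
        nlinarith
      have : K * (3 * C) ≤ K * dist (γ s) (γ t) := by linarith [le_trans hlow hkey]
      exact le_of_mul_le_mul_left this hK0
    · -- t is to the left of I⁰
      have hst : t ≤ s := le_trans ht hs0
      have hkey : dist (γ 0) (γ s) ≤ K * dist (γ t) (γ s) :=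
        hsand t s 0 s hst ⟨ht, hs0⟩ ⟨hst, le_refl s⟩
      have hlow : 3 * K * C ≤ dist (γ 0) (γ s) := by
        rw [hdist2 0 (by norm_num) s ⟨hs0, hs12⟩]
        rw [hV, abs_of_nonpos (by linarith)]
        have : a ≤ s := hs.1
        nlinarith
      rw [dist_comm (γ t) (γ s)] at hkey
      have : K * (3 * C) ≤ K * dist (γ s) (γ t) := by linarith [le_trans hlow hkey]
      exact le_of_mul_le_mul_left this hK0
  -- definition of U
  set J : Set ℍ := γ '' Icc a b with hJ_def
  have hJne : J.Nonempty := ⟨γ a, mem_image_of_mem γ ⟨le_refl a, hab⟩⟩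
  set U : Set ℍ := {x : ℍ | infDist x J < C} with hU_def
  have hUopen : IsOpen U := by
    have : U = (fun x => infDist x J) ⁻¹' (Iio C) := rfl
    rw [this]
    exact (continuous_infDist_pt J).isOpen_preimage _ isOpen_Iio
  have hclosU : closure U ⊆ {x : ℍ | infDist x J ≤ C} := by
    apply closure_minimal
    · intro y hy
      simp only [hU_def, mem_setOf_eq] at hy
      exact le_of_lt hy
    · exact isClosed_le (continuous_infDist_pt J) continuous_const
  -- the generic disjointness statement
  have hdisj : ∀ s' t' : ℝ, s' ≤ t' → (∀ t ∈ Icc s' t', 1/2 ≤ t ∨ t ≤ 0) →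
      closure U ∩ {x : ℍ | infDist x (γ '' Icc s' t') < C} = ∅ := by
    intro s' t' hst' hcond
    rw [eq_empty_iff_forall_notMem]
    rintro x ⟨hxcl, hxN⟩
    have hPne : (γ '' Icc s' t').Nonempty := ⟨γ s', mem_image_of_mem γ ⟨le_refl s', hst'⟩⟩
    obtain ⟨z, hzP, hzd⟩ := (infDist_lt_iff hPne).mp hxN
    have hxJ : infDist x J ≤ C := hclosU hxcl
    have hlt : infDist x J < C + (C - dist x z) := by linarith
    obtain ⟨y, hyJ, hyd⟩ := (infDist_lt_iff hJne).mp hlt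
    obtain ⟨s, hs, rfl⟩ := hyJ
    obtain ⟨t, ht, rfl⟩ := hzP
    have h3 : 3 * C ≤ dist (γ s) (γ t) := hsep s hs t (hcond t ht)
    have htri : dist (γ s) (γ t) ≤ dist (γ s) x + dist x (γ t) := dist_triangle _ _ _
    rw [dist_comm (γ s) x] at htri
    linarith
  refine ⟨U, hUopen, ⟨a, b, ha_pos.le, hab, by linarith, ?_, ?_⟩, ?_, ?_, ?_⟩
  · -- the length of J
    have : dist (γ a) (γ b) = 2 * D * (b - a) := by
      rw [hdist2 a ⟨ha_pos.le, by linarith⟩ b ⟨by linarith, hb_le⟩, hV,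
        abs_of_nonpos (by linarith)]
      ring
    rw [this, hb_def]
    nlinarith
  · -- J ⊆ U
    intro x hx
    exact lt_of_le_of_lt (le_of_eq (infDist_zero_of_mem hx)) hC
  · -- U ⊆ N_C(I⁰)
    intro x hx
    have hsub : J ⊆ γ '' Icc 0 (1/2) :=
      image_mono (f := γ) (Icc_subset_Icc ha_pos.le hb_le)
    exact lt_of_le_of_lt (infDist_le_infDist_of_subset hsub hJne) hx
  · -- disjoint from the other α-pieces
    intro k hk
    refine hdisj (k : ℝ) ((k : ℝ) + 1/2) (by norm_num : ((k:ℝ) ≤ (k:ℝ) + 1/2)) ?_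
    · intro t ht
      rcases lt_or_gt_of_ne hk with hneg | hpos
      · right
        have : (k : ℝ) + 1/2 ≤ 0 := by
          have : (k : ℝ) ≤ -1 := by exact_mod_cast (by omega : k ≤ -1)
          linarith
        linarith [ht.2]
      · left
        have : (1 : ℝ) ≤ (k : ℝ) := by exact_mod_cast (by omega : 1 ≤ k)
        linarith [ht.1]
  · -- disjoint from the β-pieces
    intro k
    refine hdisj ((k : ℝ) + 1/2) ((k : ℝ) + 1) (by norm_num : ((k:ℝ) + 1/2 ≤ (k:ℝ) + 1)) ?_
    · intro t ht
      rcases le_or_gt 0 k with hpos | hneg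
      · left
        have : (0 : ℝ) ≤ (k : ℝ) := by exact_mod_cast hpos
        linarith [ht.1]
      · right
        have : (k : ℝ) + 1 ≤ 0 := by
          have : (k : ℝ) ≤ -1 := by exact_mod_cast (by omega : k ≤ -1)
          linarith
        linarith [ht.2]


end
end
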